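/- arXiv:1108.1319 — 5 statements merged into one kernel-verified Lean document; each statement's English description precedes it below -/
import Mathlib

section
/- Let α₁,…,α_d be positive reals and set ᾱ = Σ_{k=1}^d 1/α_k. If 0 < r < ᾱ, then the integral over [0,1]^d of 1/(Σ_{k=1}^d |z_k|^{r·α_k}) dz is finite. -/
open MeasureTheory

theorem integrableOn_unitCube_inv_sum_abs_rpow
    (d : ℕ) (α : Fin d → ℝ) (hα : ∀ k, 0 < α k) (r : ℝ)
    (hr : 0 < r) (hr' : r < ∑ k, 1 / α k) :
    IntegrableOn (fun z : Fin d → ℝ => (∑ k, |z k| ^ (r * α k))⁻¹)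
      (Set.Icc (0 : Fin d → ℝ) 1) volume := by
  set A : ℝ := ∑ k, 1 / α k with hA
  have hA0 : 0 < A := hr.trans hr'
  set p : ℝ := r / A with hp
  have hp0 : 0 < p := div_pos hr hA0
  have hp1 : p < 1 := (div_lt_one hA0).2 hr'
  -- the one-dimensional comparison function
  set g : ℝ → ℝ := (Set.Icc (0:ℝ) 1).indicator (fun x => x ^ (-p)) with hg
  have hg_int : Integrable g := by
    rw [hg, integrable_indicator_iff measurableSet_Icc]
    have := intervalIntegral.intervalIntegrable_rpow' (a := 0) (b := 1)
      (r := -p) (by linarith)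
    rwa [intervalIntegrable_iff_integrableOn_Icc_of_le (by norm_num)] at this
  have hG : Integrable (fun z : Fin d → ℝ => ∏ k, g (z k)) :=
    Integrable.fintype_prod (𝕜 := ℝ) (fun _ => hg_int)
  -- measurability of the integrand
  have hmeas : Measurable (fun z : Fin d → ℝ => (∑ k, |z k| ^ (r * α k))⁻¹) := by
    measurability
  -- a.e. each coordinate is nonzero
  have hae : ∀ᵐ z : Fin d → ℝ ∂(volume.restrict (Set.Icc (0 : Fin d → ℝ) 1)),
      ∀ k, z k ≠ 0 := by
    apply ae_restrict_of_ae
    rw [ae_iff]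
    have : {z : Fin d → ℝ | ¬ ∀ k, z k ≠ 0} ⊆
        ⋃ k, (Function.eval k ⁻¹' ({0} : Set ℝ)) := by
      intro z hz
      simp only [Set.mem_setOf_eq, not_forall, not_not] at hz
      obtain ⟨k, hk⟩ := hz
      exact Set.mem_iUnion.2 ⟨k, hk⟩
    refine measure_mono_null this (measure_iUnion_null fun k => ?_)
    rw [MeasureTheory.volume_pi]
    exact Measure.pi_eval_preimage_null _ (measure_singleton 0)
  refine Integrable.mono' hG.integrableOn hmeas.aestronglyMeasurable.restrict ?_
  filter_upwards [hae, ae_restrict_mem measurableSet_Icc] with z hz hzIcc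
  have hz0 : ∀ k, 0 < z k := fun k =>
    lt_of_le_of_ne (hzIcc.1 k) (Ne.symm (hz k))
  have hz1 : ∀ k, z k ≤ 1 := fun k => hzIcc.2 k
  -- rewrite the product of g's
  have hGz : (∏ k, g (z k)) = ∏ k, (z k) ^ (-p) := by
    refine Finset.prod_congr rfl fun k _ => ?_
    rw [hg, Set.indicator_of_mem (Set.mem_Icc.2 ⟨(hz0 k).le, hz1 k⟩)]
  rw [hGz]
  -- positivity of the sum
  have hd : Nonempty (Fin d) := by
    rcases Nat.eq_zero_or_pos d with h | h
    · exfalso; subst h; simp [hA] at hA0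
    · exact ⟨⟨0, h⟩⟩
  have hterm : ∀ k, (0:ℝ) < |z k| ^ (r * α k) := fun k =>
    Real.rpow_pos_of_pos (abs_pos.2 (hz0 k).ne') _
  have hS : 0 < ∑ k, |z k| ^ (r * α k) :=
    Finset.sum_pos (fun k _ => hterm k) Finset.univ_nonempty
  -- weighted AM-GM
  set w : Fin d → ℝ := fun k => (1 / α k) / A with hw
  have hw0 : ∀ k, 0 ≤ w k := fun k =>
    div_nonneg (div_nonneg zero_le_one (hα k).le) hA0.le
  have hwsum : ∑ k, w k = 1 := by
    rw [hw, ← Finset.sum_div, ← hA, div_self hA0.ne']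
  have hgm := Real.geom_mean_le_arith_mean_weighted Finset.univ w
    (fun k => |z k| ^ (r * α k)) (fun k _ => hw0 k) hwsum
    (fun k _ => (hterm k).le)
  -- each (|z k| ^ (r * α k)) ^ (w k) = z k ^ p
  have hpow : ∀ k, (|z k| ^ (r * α k)) ^ (w k) = (z k) ^ p := by
    intro k
    rw [← Real.rpow_mul (abs_nonneg _), abs_of_pos (hz0 k)]
    congr 1
    rw [hw, hp]
    field_simp
    rw [div_self (hα k).ne']
  have hprod : (∏ k, (|z k| ^ (r * α k)) ^ (w k)) = ∏ k, (z k) ^ p :=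
    Finset.prod_congr rfl fun k _ => hpow k
  have hwle : ∀ k, w k ≤ 1 := by
    intro k
    rw [hw, div_le_one hA0, hA]
    exact Finset.single_le_sum (f := fun j => 1 / α j)
      (fun j _ => div_nonneg zero_le_one (hα j).le) (Finset.mem_univ k)
  have hsum_le : (∑ k, w k * |z k| ^ (r * α k)) ≤ ∑ k, |z k| ^ (r * α k) :=
    Finset.sum_le_sum fun k _ => by
      nlinarith [hterm k, hwle k, hw0 k]
  have key : (∏ k, (z k) ^ p) ≤ ∑ k, |z k| ^ (r * α k) := by
    calc (∏ k, (z k) ^ p) = ∏ k, (|z k| ^ (r * α k)) ^ (w k) := hprod.symm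
      _ ≤ ∑ k, w k * |z k| ^ (r * α k) := hgm
      _ ≤ _ := hsum_le
  have hprodpos : 0 < ∏ k, (z k) ^ p :=
    Finset.prod_pos fun k _ => Real.rpow_pos_of_pos (hz0 k) _
  have hinv : (∑ k, |z k| ^ (r * α k))⁻¹ ≤ (∏ k, (z k) ^ p)⁻¹ :=
    inv_anti₀ hprodpos key
  have hprodneg : (∏ k, (z k) ^ (-p)) = (∏ k, (z k) ^ p)⁻¹ := by
    rw [← Finset.prod_inv_distrib]
    exact Finset.prod_congr rfl fun k _ => Real.rpow_neg (hz0 k).le _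
  rw [Real.norm_eq_abs, abs_of_pos (inv_pos.2 hS), hprodneg]
  exact hinv
end

section
/- For any positive reals α₁,…,α_d with Σ_{k=1}^d 1/α_k = 2, the integral over ℝ^d of 1/(1 + Σ_{k=1}^d |y_k|^{α_k})^3 dy is finite. -/
open MeasureTheory

/-- Key elementary bound: `(1+s)^α ≤ 2^α * (1 + s^α)` for `s ≥ 0`, `α > 0`. -/
lemma aux_one_add_rpow_le {s α : ℝ} (hs : 0 ≤ s) (hα : 0 < α) :
    (1 + s) ^ α ≤ 2 ^ α * (1 + s ^ α) := by
  rcases le_total s 1 with h | h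
  · calc (1 + s) ^ α ≤ 2 ^ α := by
          apply Real.rpow_le_rpow (by linarith) (by linarith) hα.le
        _ ≤ 2 ^ α * (1 + s ^ α) := by
          nlinarith [Real.rpow_pos_of_pos (show (0:ℝ) < 2 by norm_num) α,
            Real.rpow_nonneg hs α]
  · calc (1 + s) ^ α ≤ (2 * s) ^ α := by
          apply Real.rpow_le_rpow (by linarith) (by linarith) hα.le
        _ = 2 ^ α * s ^ α := Real.mul_rpow (by norm_num) hs
        _ ≤ 2 ^ α * (1 + s ^ α) := by
          have := Real.rpow_pos_of_pos (show (0:ℝ) < 2 by norm_num) α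
          nlinarith [Real.rpow_nonneg hs α]

/-- One-dimensional integrability of `(1+|t|^α)^(-3/(2α))`. -/
lemma aux_onedim_integrable {α : ℝ} (hα : 0 < α) :
    Integrable (fun t : ℝ => ((1 + |t| ^ α) ^ (3 / (2 * α)))⁻¹) volume := by
  have hbase : Integrable (fun t : ℝ => (1 + ‖t‖) ^ (-(3/2 : ℝ))) volume :=
    integrable_one_add_norm (by simp; norm_num)
  refine ((hbase.const_mul ((2:ℝ) ^ ((3:ℝ)/2))).mono' ?_ ?_)
  · apply Continuous.aestronglyMeasurable
    apply Continuous.inv₀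
    · exact (continuous_const.add (continuous_abs.rpow_const fun x => Or.inr hα.le)).rpow_const
        (fun x => Or.inr (by positivity))
    · intro x
      have : (0:ℝ) < 1 + |x| ^ α := by positivity
      positivity
  · filter_upwards with t
    have ht : (0:ℝ) ≤ |t| := abs_nonneg t
    have h1 : (0:ℝ) < 1 + |t| ^ α := by positivity
    have h2 : (0:ℝ) < 1 + |t| := by positivity
    rw [Real.norm_of_nonneg (by positivity)]
    set A : ℝ := (1 + |t|) ^ ((3:ℝ)/2) with hA
    set B : ℝ := (1 + |t| ^ α) ^ (3 / (2 * α)) with hB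
    set C : ℝ := (2:ℝ) ^ ((3:ℝ)/2) with hC
    have hApos : 0 < A := Real.rpow_pos_of_pos h2 _
    have hBpos : 0 < B := Real.rpow_pos_of_pos h1 _
    have hCpos : 0 < C := Real.rpow_pos_of_pos (by norm_num) _
    have key : A ≤ C * B := by
      have h3 : ((1 + |t|) ^ α) ^ (3 / (2 * α)) ≤ (2 ^ α * (1 + |t| ^ α)) ^ (3 / (2 * α)) :=
        Real.rpow_le_rpow (by positivity) (aux_one_add_rpow_le ht hα) (by positivity)
      have hl : ((1 + |t|) ^ α) ^ (3 / (2 * α)) = A := by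
        rw [hA, ← Real.rpow_mul h2.le]
        congr 1
        field_simp
      have hr : ((2:ℝ) ^ α * (1 + |t| ^ α)) ^ (3 / (2 * α)) = C * B := by
        rw [Real.mul_rpow (by positivity) h1.le, hC, hB, ← Real.rpow_mul (by norm_num)]
        congr 2
        field_simp
      rw [hl, hr] at h3
      exact h3
    have hstep : A / C ≤ B := (div_le_iff₀' hCpos).mpr key
    have : B⁻¹ ≤ (A / C)⁻¹ := inv_anti₀ (by positivity) hstep
    calc B⁻¹ ≤ (A / C)⁻¹ := this
      _ = C * ((1 + ‖t‖) ^ (-(3/2:ℝ))) := by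
          rw [Real.rpow_neg (by positivity)]
          show (A / C)⁻¹ = C * A⁻¹
          field_simp

theorem integrable_inv_one_add_sum_abs_rpow_cube
    (d : ℕ) (α : Fin d → ℝ) (hα : ∀ k, 0 < α k) (hsum : ∑ k, 1 / α k = 2) :
    Integrable (fun y : Fin d → ℝ => ((1 + ∑ k, |y k| ^ α k) ^ 3)⁻¹) volume := by
  set w : Fin d → ℝ := fun k => 1 / (2 * α k) with hw
  have hw0 : ∀ k, 0 < w k := fun k => by have := hα k; positivity
  have hwsum : ∑ k, w k = 1 := by
    have h : ∑ k, w k = (∑ k, 1 / α k) / 2 := by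
      rw [Finset.sum_div]
      refine Finset.sum_congr rfl fun k _ => ?_
      have := (hα k).ne'
      rw [hw]
      field_simp
    rw [h, hsum]; norm_num
  have hg : Integrable (fun y : Fin d → ℝ =>
      ∏ k, ((1 + |y k| ^ α k) ^ (3 / (2 * α k)))⁻¹) volume :=
    Integrable.fintype_prod (fun k => aux_onedim_integrable (hα k))
  refine hg.mono' ?_ ?_
  · apply Continuous.aestronglyMeasurable
    apply Continuous.inv₀
    · exact (continuous_const.add (continuous_finset_sum _ fun k _ =>
        ((continuous_abs.comp (continuous_apply k)).rpow_const fun x => Or.inr (hα k).le))).pow 3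
    · intro y
      have h1 : (0:ℝ) < 1 + ∑ k, |y k| ^ α k := by positivity
      positivity
  · filter_upwards with y
    set a : Fin d → ℝ := fun k => |y k| ^ α k with ha
    have ha0 : ∀ k, 0 ≤ a k := fun k => Real.rpow_nonneg (abs_nonneg _) _
    have hS : (0:ℝ) < 1 + ∑ k, a k := by positivity
    -- weighted AM-GM
    have amgm : ∏ k, (1 + a k) ^ w k ≤ 1 + ∑ k, a k := by
      calc ∏ k, (1 + a k) ^ w k ≤ ∑ k, w k * (1 + a k) :=
            Real.geom_mean_le_arith_mean_weighted Finset.univ w (fun k => 1 + a k)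
              (fun i _ => (hw0 i).le) hwsum (fun i _ => by have := ha0 i; positivity)
        _ = (∑ k, w k) + ∑ k, w k * a k := by
            rw [← Finset.sum_add_distrib]
            exact Finset.sum_congr rfl fun k _ => by ring
        _ ≤ 1 + ∑ k, a k := by
            rw [hwsum]
            have : ∑ k, w k * a k ≤ ∑ k, a k := by
              refine Finset.sum_le_sum fun k _ => ?_
              have hwk1 : w k ≤ 1 := by
                rw [← hwsum]
                exact Finset.single_le_sum (fun i _ => (hw0 i).le) (Finset.mem_univ k)
              nlinarith [ha0 k, hw0 k]
            linarith
    have hP : (0:ℝ) < ∏ k, (1 + a k) ^ w k :=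
      Finset.prod_pos fun k _ => Real.rpow_pos_of_pos (by have := ha0 k; linarith) _
    have hprod : ∏ k, ((1 + a k) ^ (3 / (2 * α k)))⁻¹
        = ((∏ k, (1 + a k) ^ w k) ^ 3)⁻¹ := by
      rw [Finset.prod_inv_distrib, ← Finset.prod_pow]
      congr 1
      refine Finset.prod_congr rfl fun k _ => ?_
      rw [← Real.rpow_natCast ((1 + a k) ^ w k) 3, ← Real.rpow_mul (by have := ha0 k; linarith)]
      congr 1
      have := (hα k).ne'
      rw [hw]
      push_cast
      field_simp
    have hineq : ((1 + ∑ k, a k) ^ 3)⁻¹ ≤ ∏ k, ((1 + a k) ^ (3 / (2 * α k)))⁻¹ := by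
      rw [hprod]
      exact inv_anti₀ (by positivity) (pow_le_pow_left₀ hP.le amgm 3)
    have hgnn : (0:ℝ) ≤ ∏ k, ((1 + |y k| ^ α k) ^ (3 / (2 * α k)))⁻¹ :=
      Finset.prod_nonneg fun k _ => by positivity
    rw [Real.norm_of_nonneg (by positivity)]
    exact hineq
end

section
/- Let α₁,…,α_d > 0 with ᾱ := Σ_{k=1}^d 1/α_k < 3, and θ > 0. Then the triple integral ∫₀^∞ e^{-θu} ∫₀^∞ e^{-θv} ∫₀^{min(u,v)} e^{θs}/(u+v-2s)^{ᾱ} ds dv du is finite when 1 < ᾱ < 2. -/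
open MeasureTheory

private lemma lintegral_comp_neg' (f : ℝ → ENNReal) :
    ∫⁻ x, f (-x) = ∫⁻ x, f x := by
  have h := lintegral_map_equiv (μ := (volume : Measure ℝ)) f (MeasurableEquiv.neg ℝ)
  rw [show ⇑(MeasurableEquiv.neg ℝ) = (Neg.neg : ℝ → ℝ) from rfl,
    Measure.map_neg_eq_self (volume : Measure ℝ)] at h
  exact h.symm

/-- Inner integral bound. -/
private lemma inner_bound (abar θ : ℝ) (h1 : 1 < abar) (hθ : 0 < θ)
    (u v : ℝ) (hu : 0 < u) (hv : 0 < v) (huv : u ≠ v) :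
    (∫⁻ s in Set.Ioc (0:ℝ) (min u v),
      ENNReal.ofReal (Real.exp (-θ * u) * Real.exp (-θ * v) * Real.exp (θ * s) /
        (u + v - 2 * s) ^ abar))
    ≤ ENNReal.ofReal (Real.exp (-θ * u / 2)) * ENNReal.ofReal (Real.exp (-θ * v / 2)) *
      ENNReal.ofReal ((1 / (2 * (abar - 1))) * |u - v| ^ (1 - abar)) := by
  set m := min u v with hm
  have hm0 : 0 < m := lt_min hu hv
  have habs : u + v - 2 * m = |u - v| := by
    rcases le_total u v with h | h
    · rw [hm, min_eq_left h, abs_of_nonpos (by linarith)]; ring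
    · rw [hm, min_eq_right h, abs_of_nonneg (by linarith)]; ring
  have hδ : 0 < u + v - 2 * m := by
    rw [habs]; exact abs_pos.mpr (sub_ne_zero.mpr huv)
  -- pointwise bound
  have step1 : (∫⁻ s in Set.Ioc (0:ℝ) m,
      ENNReal.ofReal (Real.exp (-θ * u) * Real.exp (-θ * v) * Real.exp (θ * s) /
        (u + v - 2 * s) ^ abar))
      ≤ ∫⁻ s in Set.Ioc (0:ℝ) m,
        ENNReal.ofReal (Real.exp (-θ * u / 2) * Real.exp (-θ * v / 2)) *
          ENNReal.ofReal ((u + v - 2 * s) ^ (-abar)) := by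
    refine lintegral_mono_ae ?_
    filter_upwards [ae_restrict_mem measurableSet_Ioc] with s hs
    have hs2 : s ≤ m := hs.2
    have hxpos : 0 < u + v - 2 * s := by nlinarith
    rw [← ENNReal.ofReal_mul (by positivity)]
    apply ENNReal.ofReal_le_ofReal
    rw [Real.rpow_neg hxpos.le, ← div_eq_mul_inv]
    apply div_le_div_of_nonneg_right ?_ (Real.rpow_pos_of_pos hxpos abar).le
    · rw [← Real.exp_add, ← Real.exp_add, ← Real.exp_add]
      apply Real.exp_le_exp.mpr
      have : s ≤ (u + v) / 2 := by
        have : m ≤ (u + v) / 2 := by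
          rcases le_total u v with h | h
          · rw [hm, min_eq_left h]; linarith
          · rw [hm, min_eq_right h]; linarith
        linarith
      nlinarith
  refine step1.trans ?_
  rw [lintegral_const_mul' _ _ ENNReal.ofReal_ne_top]
  -- compute the remaining integral
  have hcont : ContinuousOn (fun s : ℝ => (u + v - 2 * s) ^ (-abar)) (Set.Icc 0 m) := by
    apply ContinuousOn.rpow_const
    · fun_prop
    · intro x hx
      left
      have : 0 < u + v - 2 * x := by
        have := hx.2
        nlinarith
      exact this.ne'
  have hInt : IntegrableOn (fun s : ℝ => (u + v - 2 * s) ^ (-abar)) (Set.Ioc 0 m) :=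
    (hcont.integrableOn_Icc).mono_set Set.Ioc_subset_Icc_self
  have hnn : 0 ≤ᶠ[ae (volume.restrict (Set.Ioc (0:ℝ) m))]
      fun s : ℝ => (u + v - 2 * s) ^ (-abar) := by
    filter_upwards [ae_restrict_mem measurableSet_Ioc] with s hs
    have : 0 < u + v - 2 * s := by have := hs.2; nlinarith
    positivity
  have heq : (∫⁻ s in Set.Ioc (0:ℝ) m, ENNReal.ofReal ((u + v - 2 * s) ^ (-abar)))
      = ENNReal.ofReal (∫ s in Set.Ioc (0:ℝ) m, (u + v - 2 * s) ^ (-abar)) :=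
    (ofReal_integral_eq_lintegral_ofReal hInt hnn).symm
  rw [heq]
  -- FTC computation
  have hFTC : (∫ s in (0:ℝ)..m, (u + v - 2 * s) ^ (-abar))
      = (u + v - 2 * m) ^ (1 - abar) / (2 * (abar - 1))
        - (u + v) ^ (1 - abar) / (2 * (abar - 1)) := by
    have hd : ∀ x ∈ Set.uIcc (0:ℝ) m,
        HasDerivAt (fun s : ℝ => (u + v - 2 * s) ^ (1 - abar) / (2 * (abar - 1)))
          ((u + v - 2 * x) ^ (-abar)) x := by
      intro x hx
      rw [Set.uIcc_of_le hm0.le] at hx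
      have hxpos : 0 < u + v - 2 * x := by have := hx.2; nlinarith
      have hin : HasDerivAt (fun s : ℝ => u + v - 2 * s) (-2) x := by
        simpa using ((hasDerivAt_id x).const_mul (2:ℝ)).const_sub (u + v)
      have hout := Real.hasDerivAt_rpow_const (x := u + v - 2 * x) (p := 1 - abar)
        (Or.inl hxpos.ne')
      have hcomp := (hout.comp x hin).div_const (2 * (abar - 1))
      have hne : (2 * (abar - 1)) ≠ 0 := by nlinarith
      refine hcomp.congr_deriv (Eq.symm ?_)
      rw [show (1 - abar - 1) = -abar by ring, eq_div_iff hne]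
      ring
    have hii : IntervalIntegrable (fun s : ℝ => (u + v - 2 * s) ^ (-abar)) volume 0 m := by
      apply ContinuousOn.intervalIntegrable
      rw [Set.uIcc_of_le hm0.le]
      exact hcont
    have := intervalIntegral.integral_eq_sub_of_hasDerivAt hd hii
    simpa using this
  have hIoc : (∫ s in Set.Ioc (0:ℝ) m, (u + v - 2 * s) ^ (-abar))
      = ∫ s in (0:ℝ)..m, (u + v - 2 * s) ^ (-abar) :=
    (intervalIntegral.integral_of_le hm0.le).symm
  rw [hIoc, hFTC, ENNReal.ofReal_mul (Real.exp_nonneg _)]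
  refine mul_le_mul_right (ENNReal.ofReal_le_ofReal ?_) _
  have h2 : 0 < 2 * (abar - 1) := by linarith
  have hnn2 : 0 ≤ (u + v) ^ (1 - abar) / (2 * (abar - 1)) := by
    apply div_nonneg _ h2.le
    apply Real.rpow_nonneg
    nlinarith
  have hEq : (u + v - 2 * m) ^ (1 - abar) / (2 * (abar - 1))
      = 1 / (2 * (abar - 1)) * |u - v| ^ (1 - abar) := by
    rw [habs]; ring
  linarith

private lemma J_bound (abar θ u : ℝ) (h1 : 1 < abar) (hθ : 0 < θ) :
    (∫⁻ v in Set.Ioi (0:ℝ),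
      ENNReal.ofReal (Real.exp (-θ * v / 2) * |u - v| ^ (1 - abar)))
    ≤ (∫⁻ w, (Set.Ioo (0:ℝ) 1).indicator (fun w => ENNReal.ofReal (w ^ (1 - abar))) w)
      + (∫⁻ w, (Set.Ioo (0:ℝ) 1).indicator (fun w => ENNReal.ofReal (w ^ (1 - abar))) w)
      + ∫⁻ v in Set.Ioi (0:ℝ), ENNReal.ofReal (Real.exp (-θ * v / 2)) := by
  set G : ℝ → ENNReal :=
    fun w => (Set.Ioo (0:ℝ) 1).indicator (fun w => ENNReal.ofReal (w ^ (1 - abar))) w with hG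
  have hGmeas : Measurable G := by
    apply Measurable.indicator ?_ measurableSet_Ioo
    fun_prop
  have hpt : ∀ v ∈ Set.Ioi (0:ℝ),
      ENNReal.ofReal (Real.exp (-θ * v / 2) * |u - v| ^ (1 - abar))
      ≤ G (v - u) + G (u - v) + ENNReal.ofReal (Real.exp (-θ * v / 2)) := by
    intro v hv
    simp only [Set.mem_Ioi] at hv
    rcases eq_or_ne v u with rfl | hne
    · simp [Real.zero_rpow (by linarith : (1:ℝ) - abar ≠ 0)]
    · have hexple : Real.exp (-θ * v / 2) ≤ 1 := by
        rw [Real.exp_le_one_iff]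
        nlinarith
      by_cases hlt : |u - v| < 1
      · rcases lt_or_gt_of_ne hne with hvu | hvu
        · -- v < u, so 0 < u - v < 1
          have hpos : 0 < u - v := by linarith
          have hGuv : G (u - v) = ENNReal.ofReal ((u - v) ^ (1 - abar)) := by
            rw [hG]
            exact Set.indicator_of_mem (Set.mem_Ioo.mpr ⟨hpos, by rwa [abs_of_pos hpos] at hlt⟩) _
          have hle : ENNReal.ofReal (Real.exp (-θ * v / 2) * |u - v| ^ (1 - abar))
              ≤ G (u - v) := by
            rw [hGuv, abs_of_pos hpos]
            exact ENNReal.ofReal_le_ofReal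
              (mul_le_of_le_one_left (Real.rpow_nonneg hpos.le _) hexple)
          calc ENNReal.ofReal (Real.exp (-θ * v / 2) * |u - v| ^ (1 - abar))
              ≤ G (u - v) := hle
            _ ≤ G (v - u) + G (u - v) := le_add_self
            _ ≤ G (v - u) + G (u - v) + ENNReal.ofReal (Real.exp (-θ * v / 2)) := le_self_add
        · -- u < v, so 0 < v - u < 1
          have hpos : 0 < v - u := by linarith
          have hGvu : G (v - u) = ENNReal.ofReal ((v - u) ^ (1 - abar)) := by
            rw [hG]
            refine Set.indicator_of_mem (Set.mem_Ioo.mpr ⟨hpos, ?_⟩) _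
            rw [abs_of_neg (by linarith : u - v < 0)] at hlt
            linarith
          have hle : ENNReal.ofReal (Real.exp (-θ * v / 2) * |u - v| ^ (1 - abar))
              ≤ G (v - u) := by
            rw [hGvu, abs_of_neg (by linarith : u - v < 0), neg_sub]
            exact ENNReal.ofReal_le_ofReal
              (mul_le_of_le_one_left (Real.rpow_nonneg hpos.le _) hexple)
          calc ENNReal.ofReal (Real.exp (-θ * v / 2) * |u - v| ^ (1 - abar))
              ≤ G (v - u) := hle
            _ ≤ G (v - u) + G (u - v) := le_self_add
            _ ≤ G (v - u) + G (u - v) + ENNReal.ofReal (Real.exp (-θ * v / 2)) := le_self_add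
      · push_neg at hlt
        have hr1 : |u - v| ^ (1 - abar) ≤ 1 :=
          Real.rpow_le_one_of_one_le_of_nonpos hlt (by linarith)
        have : ENNReal.ofReal (Real.exp (-θ * v / 2) * |u - v| ^ (1 - abar))
            ≤ ENNReal.ofReal (Real.exp (-θ * v / 2)) :=
          ENNReal.ofReal_le_ofReal (mul_le_of_le_one_right (Real.exp_nonneg _) hr1)
        exact this.trans le_add_self
  have hmeas1 : Measurable fun v : ℝ => G (v - u) := hGmeas.comp (measurable_id.sub_const u)
  have hmeas2 : Measurable fun v : ℝ => G (u - v) := hGmeas.comp (measurable_const.sub measurable_id)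
  calc (∫⁻ v in Set.Ioi (0:ℝ),
        ENNReal.ofReal (Real.exp (-θ * v / 2) * |u - v| ^ (1 - abar)))
      ≤ ∫⁻ v in Set.Ioi (0:ℝ),
          (G (v - u) + G (u - v) + ENNReal.ofReal (Real.exp (-θ * v / 2))) := by
        refine lintegral_mono_ae ?_
        filter_upwards [ae_restrict_mem measurableSet_Ioi] with v hv using hpt v hv
    _ = (∫⁻ v in Set.Ioi (0:ℝ), G (v - u)) + (∫⁻ v in Set.Ioi (0:ℝ), G (u - v))
        + ∫⁻ v in Set.Ioi (0:ℝ), ENNReal.ofReal (Real.exp (-θ * v / 2)) := by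
        rw [lintegral_add_left (f := fun v => G (v - u) + G (u - v)) (hmeas1.add hmeas2), lintegral_add_left hmeas1]
    _ ≤ (∫⁻ w, G w) + (∫⁻ w, G w)
        + ∫⁻ v in Set.Ioi (0:ℝ), ENNReal.ofReal (Real.exp (-θ * v / 2)) := by
        have hA : (∫⁻ v in Set.Ioi (0:ℝ), G (v - u)) ≤ ∫⁻ w, G w :=
          (setLIntegral_le_lintegral _ _).trans_eq (lintegral_sub_right_eq_self G u)
        have hB : (∫⁻ v in Set.Ioi (0:ℝ), G (u - v)) ≤ ∫⁻ w, G w := by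
          refine (setLIntegral_le_lintegral _ _).trans_eq ?_
          have h1' : (∫⁻ v, G (u - v)) = ∫⁻ v, (fun w => G (u + w)) (-v) := by
            simp [sub_eq_add_neg]
          rw [h1', lintegral_comp_neg' (fun w => G (u + w)), lintegral_add_left_eq_self]
        exact add_le_add (add_le_add hA hB) le_rfl

theorem triple_integral_finite_intermediate
    (d : ℕ) (α : Fin d → ℝ) (hα : ∀ k, 0 < α k)
    (abar : ℝ) (habar : abar = ∑ k, 1 / α k)
    (h1 : 1 < abar) (h2 : abar < 2) (θ : ℝ) (hθ : 0 < θ) :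
    (∫⁻ u in Set.Ioi (0:ℝ), ∫⁻ v in Set.Ioi (0:ℝ), ∫⁻ s in Set.Ioc (0:ℝ) (min u v),
      ENNReal.ofReal (Real.exp (-θ * u) * Real.exp (-θ * v) * Real.exp (θ * s) /
        (u + v - 2 * s) ^ abar)) < ⊤ := by
  set M1 : ENNReal :=
    ∫⁻ w, (Set.Ioo (0:ℝ) 1).indicator (fun w => ENNReal.ofReal (w ^ (1 - abar))) w with hM1
  set K2 : ENNReal := ∫⁻ v in Set.Ioi (0:ℝ), ENNReal.ofReal (Real.exp (-θ * v / 2)) with hK2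
  set c₁ : ENNReal := ENNReal.ofReal (1 / (2 * (abar - 1))) with hc₁
  -- finiteness of the constants
  have hM1top : M1 < ⊤ := by
    rw [hM1, lintegral_indicator measurableSet_Ioo]
    exact ((intervalIntegral.integrableOn_Ioo_rpow_iff one_pos).mpr
      (by linarith)).setLIntegral_lt_top
  have hK2top : K2 < ⊤ := by
    have hInt : IntegrableOn (fun v : ℝ => Real.exp (-θ * v / 2)) (Set.Ioi 0) := by
      have h := exp_neg_integrableOn_Ioi 0 (by linarith : 0 < θ / 2)
      have heq : (fun x : ℝ => Real.exp (-(θ / 2) * x)) = fun v : ℝ => Real.exp (-θ * v / 2) := by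
        funext x; congr 1; ring
      rwa [heq] at h
    exact hInt.setLIntegral_lt_top
  have hMne : M1 + M1 + K2 ≠ ⊤ := by
    simp only [ne_eq, ENNReal.add_eq_top, not_or]
    exact ⟨⟨hM1top.ne, hM1top.ne⟩, hK2top.ne⟩
  have key : ∀ u : ℝ, 0 < u →
      (∫⁻ v in Set.Ioi (0:ℝ), ∫⁻ s in Set.Ioc (0:ℝ) (min u v),
        ENNReal.ofReal (Real.exp (-θ * u) * Real.exp (-θ * v) * Real.exp (θ * s) /
          (u + v - 2 * s) ^ abar))
      ≤ ENNReal.ofReal (Real.exp (-θ * u / 2)) * (c₁ * (M1 + M1 + K2)) := by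
    intro u hu
    have step : (∫⁻ v in Set.Ioi (0:ℝ), ∫⁻ s in Set.Ioc (0:ℝ) (min u v),
        ENNReal.ofReal (Real.exp (-θ * u) * Real.exp (-θ * v) * Real.exp (θ * s) /
          (u + v - 2 * s) ^ abar))
        ≤ ∫⁻ v in Set.Ioi (0:ℝ), (ENNReal.ofReal (Real.exp (-θ * u / 2)) * c₁) *
            ENNReal.ofReal (Real.exp (-θ * v / 2) * |u - v| ^ (1 - abar)) := by
      refine lintegral_mono_ae ?_
      have hne : ∀ᵐ v ∂(volume.restrict (Set.Ioi (0:ℝ))), v ≠ u := by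
        refine ae_restrict_of_ae ?_
        have hset : {v : ℝ | ¬ v ≠ u} = {u} := by ext x; simp
        rw [ae_iff, hset, Real.volume_singleton]
      filter_upwards [ae_restrict_mem measurableSet_Ioi, hne] with v hv hvne
      simp only [Set.mem_Ioi] at hv
      refine (inner_bound abar θ h1 hθ u v hu hv hvne.symm).trans (le_of_eq ?_)
      have hc1nn : (0:ℝ) ≤ 1 / (2 * (abar - 1)) := (one_div_pos.mpr (by nlinarith)).le
      rw [hc₁, ← ENNReal.ofReal_mul (Real.exp_nonneg _),
        ← ENNReal.ofReal_mul (mul_nonneg (Real.exp_nonneg _) (Real.exp_nonneg _)),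
        ← ENNReal.ofReal_mul (Real.exp_nonneg _),
        ← ENNReal.ofReal_mul (mul_nonneg (Real.exp_nonneg _) hc1nn)]
      congr 1
      ring
    refine step.trans ?_
    rw [lintegral_const_mul' _ _ (ENNReal.mul_ne_top ENNReal.ofReal_ne_top ENNReal.ofReal_ne_top),
      mul_assoc]
    exact mul_le_mul_right (mul_le_mul_right (J_bound abar θ u h1 hθ) _) _
  have houter : (∫⁻ u in Set.Ioi (0:ℝ), ∫⁻ v in Set.Ioi (0:ℝ),
      ∫⁻ s in Set.Ioc (0:ℝ) (min u v),
      ENNReal.ofReal (Real.exp (-θ * u) * Real.exp (-θ * v) * Real.exp (θ * s) /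
        (u + v - 2 * s) ^ abar))
      ≤ ∫⁻ u in Set.Ioi (0:ℝ),
          ENNReal.ofReal (Real.exp (-θ * u / 2)) * (c₁ * (M1 + M1 + K2)) := by
    refine lintegral_mono_ae ?_
    filter_upwards [ae_restrict_mem measurableSet_Ioi] with u hu
    exact key u hu
  refine houter.trans_lt ?_
  rw [lintegral_mul_const' _ _ (ENNReal.mul_ne_top ENNReal.ofReal_ne_top hMne)]
  exact ENNReal.mul_lt_top hK2top
    (ENNReal.mul_lt_top ENNReal.ofReal_lt_top hMne.lt_top)
end

section
/- Let α₁,…,α_d > 0 with Σ 1/α_k = 2 and let g : ℝ^d → [0,∞) be bounded, continuous at 0, and integrable (playing the role of |φ̂|²). Define W̃(n) = ∫_{ℝ^d} g(z) (1 - e^{-n S(z)})² / (S(z)² ln n) dz where S(z) = Σ_{k=1}^d |z_k|^{α_k}. Then lim_{n→∞} W̃(n) = 2 g(0) ∫_{ℝ^d} e^{-S(z)}(1 - e^{-S(z)})/S(z) dz, and in particular this limit is finite. -/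
open MeasureTheory Filter Real Set

section Aux


lemma one_sub_exp_neg_nonneg {s : ℝ} (hs : 0 ≤ s) : 0 ≤ 1 - Real.exp (-s) := by
  have : Real.exp (-s) ≤ 1 := Real.exp_le_one_iff.mpr (by linarith)
  linarith

lemma one_sub_exp_neg_le {s : ℝ} (hs : 0 ≤ s) : 1 - Real.exp (-s) ≤ s := by
  have := Real.add_one_le_exp (-s)
  linarith

lemma integrableOn_exp_neg_rpow {p : ℝ} (hp : 0 < p) :
    IntegrableOn (fun x : ℝ => Real.exp (-x ^ p)) (Ioi 0) := by
  have h := (integrableOn_Ioi_comp_rpow_iff'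
    (fun y : ℝ => Real.exp (-y) * y ^ (1/p - 1)) hp.ne').mpr ?_
  · refine h.congr_fun (fun x hx => ?_) measurableSet_Ioi
    have hx0 : (0:ℝ) < x := hx
    have hxp : (0:ℝ) < x ^ p := Real.rpow_pos_of_pos hx0 p
    simp only [smul_eq_mul]; rw [← Real.rpow_mul hx0.le]
    rw [mul_comm (Real.exp _) _, ← mul_assoc, ← Real.rpow_add hx0]
    rw [show p - 1 + p * (1/p - 1) = 0 by field_simp; ring, Real.rpow_zero, one_mul]
  · have := Real.GammaIntegral_convergent (s := 1/p) (by positivity)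
    exact this.congr_fun (fun x hx => rfl) measurableSet_Ioi

lemma integrable_exp_neg_abs_rpow {p : ℝ} (hp : 0 < p) :
    Integrable (fun x : ℝ => Real.exp (-|x| ^ p)) := by
  have hIoi : IntegrableOn (fun x : ℝ => Real.exp (-|x| ^ p)) (Ioi 0) :=
    (integrableOn_exp_neg_rpow hp).congr_fun
      (fun x hx => by rw [abs_of_pos hx]) measurableSet_Ioi
  have hIic : IntegrableOn (fun x : ℝ => Real.exp (-|x| ^ p)) (Iic 0) := by
    rw [← Measure.map_neg_eq_self (volume : Measure ℝ)]
    have m : MeasurableEmbedding fun x : ℝ => -x := (Homeomorph.neg ℝ).measurableEmbedding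
    rw [m.integrableOn_map_iff]
    simp_rw [Function.comp_def, abs_neg, neg_preimage, neg_Iic, neg_zero]
    exact (integrableOn_Ici_iff_integrableOn_Ioi).mpr hIoi
  have := hIic.union hIoi
  rwa [Iic_union_Ioi, integrableOn_univ] at this


variable {d : ℕ} {α : Fin d → ℝ} {S : (Fin d → ℝ) → ℝ}

lemma S_nonneg (hS : ∀ z, S z = ∑ k, |z k| ^ α k) (z : Fin d → ℝ) : 0 ≤ S z := by
  rw [hS]; exact Finset.sum_nonneg fun k _ => Real.rpow_nonneg (abs_nonneg _) _

lemma S_continuous (hα : ∀ k, 0 < α k) (hS : ∀ z, S z = ∑ k, |z k| ^ α k) :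
    Continuous S := by
  have : S = fun z => ∑ k, |z k| ^ α k := funext hS
  rw [this]
  refine continuous_finset_sum _ fun k _ => ?_
  have h1 : Continuous fun z : Fin d → ℝ => |z k| := (continuous_apply k).abs
  have h2 : Continuous fun t : ℝ => t ^ α k :=
    continuous_iff_continuousAt.mpr fun x =>
      Real.continuousAt_rpow_const x (α k) (Or.inr (hα k).le)
  exact h2.comp h1

lemma integrable_exp_neg_S (hα : ∀ k, 0 < α k) (hS : ∀ z, S z = ∑ k, |z k| ^ α k) :
    Integrable (fun z : Fin d → ℝ => Real.exp (-S z)) := by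
  have : (fun z : Fin d → ℝ => Real.exp (-S z))
      = fun z => ∏ k, Real.exp (-|z k| ^ α k) := by
    funext z
    rw [hS, ← Real.exp_sum]
    simp [Finset.sum_neg_distrib]
  rw [this]
  exact Integrable.fintype_prod fun k =>
    integrable_exp_neg_abs_rpow (hα k)

lemma S_scale (hα : ∀ k, 0 < α k)
    (hS : ∀ z, S z = ∑ k, |z k| ^ α k) {m : ℝ} (hm : 0 < m) (y : Fin d → ℝ) :
    S (fun k => m ^ (-(1 / α k)) * y k) = S y / m := by
  rw [hS, hS, Finset.sum_div]
  refine Finset.sum_congr rfl fun k _ => ?_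
  have h1 : (0:ℝ) < m ^ (-(1 / α k)) := Real.rpow_pos_of_pos hm _
  rw [abs_mul, abs_of_pos h1, Real.mul_rpow h1.le (abs_nonneg _),
    ← Real.rpow_mul hm.le]
  rw [show -(1 / α k) * α k = -1 by
    rw [neg_mul, one_div, inv_mul_cancel₀ (hα k).ne']]
  rw [Real.rpow_neg_one]
  field_simp



variable {d : ℕ} {α : Fin d → ℝ}

/-- The diagonal scaling linear map. -/
noncomputable def scaleMap (α : Fin d → ℝ) (m : ℝ) : (Fin d → ℝ) →ₗ[ℝ] (Fin d → ℝ) :=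
  Matrix.toLin' (Matrix.diagonal fun k => m ^ (-(1 / α k)))

lemma scaleMap_apply (m : ℝ) (y : Fin d → ℝ) (k : Fin d) :
    scaleMap α m y k = m ^ (-(1 / α k)) * y k := by
  simp [scaleMap, Matrix.toLin'_apply, Matrix.mulVec_diagonal]

lemma scaleMap_det (hα : ∀ k, 0 < α k) (hsum : ∑ k, 1 / α k = 2) {m : ℝ} (hm : 0 < m) :
    LinearMap.det (scaleMap α m) = (m ^ 2)⁻¹ := by
  rw [scaleMap, LinearMap.det_toLin', Matrix.det_diagonal]
  have : ∀ k ∈ Finset.univ, m ^ (-(1 / α k)) = Real.exp (-(1 / α k) * Real.log m) := by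
    intro k _
    rw [Real.rpow_def_of_pos hm, mul_comm]
  rw [Finset.prod_congr rfl this, ← Real.exp_sum]
  have : ∑ k : Fin d, -(1 / α k) * Real.log m = -(2 * Real.log m) := by
    rw [← Finset.sum_mul]
    rw [Finset.sum_neg_distrib, hsum]
    ring
  rw [this, Real.exp_neg]
  congr 1
  rw [show (2:ℝ) * Real.log m = Real.log (m^2) by
    rw [Real.log_pow]; push_cast; ring]
  exact Real.exp_log (by positivity)

lemma integral_scaleMap (hα : ∀ k, 0 < α k) (hsum : ∑ k, 1 / α k = 2) {m : ℝ} (hm : 0 < m)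
    (φ : (Fin d → ℝ) → ℝ) (hφ : AEStronglyMeasurable φ volume) :
    ∫ z, φ z = (m ^ 2)⁻¹ * ∫ y, φ (scaleMap α m y) := by
  have hdet : LinearMap.det (scaleMap α m) ≠ 0 := by
    rw [scaleMap_det hα hsum hm]; positivity
  have hmap : Measure.map (scaleMap α m) volume
      = ENNReal.ofReal |((m^2 : ℝ)⁻¹)⁻¹| • volume := by
    rw [Real.map_linearMap_volume_pi_eq_smul_volume_pi hdet, scaleMap_det hα hsum hm]
  have hmeas : Measurable (scaleMap α m) := (scaleMap α m).continuous_of_finiteDimensional.measurable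
  have h1 : ∫ z, φ z ∂(Measure.map (scaleMap α m) volume) = ∫ y, φ (scaleMap α m y) := by
    apply integral_map hmeas.aemeasurable
    rw [hmap]
    refine hφ.mono_ac ?_
    exact Measure.smul_absolutelyContinuous
  rw [hmap] at h1
  rw [integral_smul_measure] at h1
  rw [abs_of_pos (a := ((m^2 : ℝ)⁻¹)⁻¹) (by positivity)] at h1
  rw [ENNReal.toReal_ofReal (by positivity), inv_inv] at h1
  rw [← h1, smul_eq_mul, ← mul_assoc,
    inv_mul_cancel₀ (by positivity : (m:ℝ)^2 ≠ 0), one_mul]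



section P4
variable {d : ℕ} {α : Fin d → ℝ} {S : (Fin d → ℝ) → ℝ} {g : (Fin d → ℝ) → ℝ}

lemma r_nonneg (hS : ∀ z, S z = ∑ k, |z k| ^ α k) (y : Fin d → ℝ) :
    0 ≤ Real.exp (-S y) * (1 - Real.exp (-S y)) / S y := by
  have h0 := S_nonneg hS y
  have := one_sub_exp_neg_nonneg h0
  positivity

lemma r_le (hS : ∀ z, S z = ∑ k, |z k| ^ α k) (y : Fin d → ℝ) :
    Real.exp (-S y) * (1 - Real.exp (-S y)) / S y ≤ Real.exp (-S y) := by
  have h0 := S_nonneg hS y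
  rcases eq_or_lt_of_le h0 with h | h
  · rw [← h]; simp [Real.exp_pos]
  · rw [div_le_iff₀ h]
    have h1 := one_sub_exp_neg_le h0
    have h2 := Real.exp_pos (-S y)
    nlinarith

lemma S_measurable (hα : ∀ k, 0 < α k) (hS : ∀ z, S z = ∑ k, |z k| ^ α k) :
    Measurable S := (S_continuous hα hS).measurable

lemma r_measurable (hα : ∀ k, 0 < α k) (hS : ∀ z, S z = ∑ k, |z k| ^ α k) :
    Measurable (fun y => Real.exp (-S y) * (1 - Real.exp (-S y)) / S y) := by
  have hm := S_measurable hα hS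
  fun_prop

lemma r_integrable (hα : ∀ k, 0 < α k) (hS : ∀ z, S z = ∑ k, |z k| ^ α k) :
    Integrable (fun y => Real.exp (-S y) * (1 - Real.exp (-S y)) / S y) := by
  refine (integrable_exp_neg_S hα hS).mono
    (r_measurable hα hS).aestronglyMeasurable ?_
  refine Eventually.of_forall fun y => ?_
  rw [Real.norm_eq_abs, Real.norm_eq_abs, abs_of_nonneg (r_nonneg hS y),
    abs_of_nonneg (Real.exp_pos _).le]
  exact r_le hS y

lemma scaleMap_qmp (hα : ∀ k, 0 < α k) (hsum : ∑ k, 1 / α k = 2) {m : ℝ} (hm : 0 < m) :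
    Measure.QuasiMeasurePreserving (scaleMap α m)
      (volume : Measure (Fin d → ℝ)) volume := by
  refine ⟨(scaleMap α m).continuous_of_finiteDimensional.measurable, ?_⟩
  have hdet : LinearMap.det (scaleMap α m) ≠ 0 := by
    rw [scaleMap_det hα hsum hm]; positivity
  rw [Real.map_linearMap_volume_pi_eq_smul_volume_pi hdet]
  exact Measure.smul_absolutelyContinuous

lemma g_comp_aesm (hgi : Integrable g (volume : Measure (Fin d → ℝ)))
    (hα : ∀ k, 0 < α k) (hsum : ∑ k, 1 / α k = 2) {m : ℝ} (hm : 0 < m) :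
    AEStronglyMeasurable (fun y => g (scaleMap α m y)) (volume : Measure (Fin d → ℝ)) :=
  hgi.aestronglyMeasurable.comp_quasiMeasurePreserving (scaleMap_qmp hα hsum hm)

lemma k_integrand_integrable (hα : ∀ k, 0 < α k) (hsum : ∑ k, 1 / α k = 2)
    (hS : ∀ z, S z = ∑ k, |z k| ^ α k)
    (hg0 : ∀ z, 0 ≤ g z) {C : ℝ} (hC : ∀ z, g z ≤ C)
    (hgi : Integrable g (volume : Measure (Fin d → ℝ))) {m : ℝ} (hm : 0 < m) :
    Integrable (fun y => g (scaleMap α m y) *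
      (Real.exp (-S y) * (1 - Real.exp (-S y)) / S y)) := by
  have hC0 : 0 ≤ C := le_trans (hg0 0) (hC 0)
  refine ((integrable_exp_neg_S hα hS).const_mul C).mono
    ((g_comp_aesm hgi hα hsum hm).mul (r_measurable hα hS).aestronglyMeasurable) ?_
  refine Eventually.of_forall fun y => ?_
  rw [Real.norm_eq_abs, Real.norm_eq_abs,
    abs_of_nonneg (mul_nonneg (hg0 _) (r_nonneg hS y)),
    abs_of_nonneg (by positivity)]
  exact mul_le_mul (hC _) (r_le hS y) (r_nonneg hS y) hC0

lemma h_eq_k (hα : ∀ k, 0 < α k) (hsum : ∑ k, 1 / α k = 2)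
    (hS : ∀ z, S z = ∑ k, |z k| ^ α k)
    (hgi : Integrable g (volume : Measure (Fin d → ℝ))) {m : ℝ} (hm : 0 < m) :
    ∫ z, g z * (2 * Real.exp (-(m * S z)) * (1 - Real.exp (-(m * S z))) / S z)
      = (2 / m) * ∫ y, g (scaleMap α m y) *
          (Real.exp (-S y) * (1 - Real.exp (-S y)) / S y) := by
  have hSm := S_measurable hα hS
  have hφ : AEStronglyMeasurable
      (fun z => g z * (2 * Real.exp (-(m * S z)) * (1 - Real.exp (-(m * S z))) / S z))
      (volume : Measure (Fin d → ℝ)) := by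
    refine hgi.aestronglyMeasurable.mul ?_
    apply Measurable.aestronglyMeasurable
    fun_prop
  rw [integral_scaleMap hα hsum hm _ hφ]
  have key : ∀ y, g (scaleMap α m y) *
        (2 * Real.exp (-(m * S (scaleMap α m y))) *
          (1 - Real.exp (-(m * S (scaleMap α m y)))) / S (scaleMap α m y))
      = (2 * m) * (g (scaleMap α m y) *
          (Real.exp (-S y) * (1 - Real.exp (-S y)) / S y)) := by
    intro y
    have hsc : S (scaleMap α m y) = S y / m := by
      have : (scaleMap α m y) = fun k => m ^ (-(1 / α k)) * y k :=
        funext fun k => scaleMap_apply m y k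
      rw [this]; exact S_scale hα hS hm y
    rw [hsc]
    rw [mul_div_cancel₀ _ hm.ne']
    rw [div_div_eq_mul_div, mul_comm]
    ring
  simp_rw [key]
  rw [integral_const_mul]
  rw [← mul_assoc]
  congr 1
  rw [sq]
  field_simp
end P4

section P5
variable {d : ℕ} {α : Fin d → ℝ} {S : (Fin d → ℝ) → ℝ} {g : (Fin d → ℝ) → ℝ}

lemma scaleMap_tendsto (hα : ∀ k, 0 < α k) (y : Fin d → ℝ) :
    Tendsto (fun m : ℝ => (scaleMap α m y : Fin d → ℝ)) atTop (nhds 0) := by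
  rw [tendsto_pi_nhds]
  intro k
  have h1 : Tendsto (fun m : ℝ => m ^ (-(1 / α k)) * y k) atTop (nhds (0 * y k)) :=
    (tendsto_rpow_neg_atTop (one_div_pos.mpr (hα k))).mul_const (y k)
  rw [zero_mul] at h1
  refine h1.congr fun m => ?_
  rw [scaleMap_apply]

lemma k_tendsto (hα : ∀ k, 0 < α k) (hsum : ∑ k, 1 / α k = 2)
    (hS : ∀ z, S z = ∑ k, |z k| ^ α k)
    (hg0 : ∀ z, 0 ≤ g z) {C : ℝ} (hC : ∀ z, g z ≤ C)
    (hgc : ContinuousAt g 0)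
    (hgi : Integrable g (volume : Measure (Fin d → ℝ))) :
    Tendsto (fun m : ℝ => ∫ y, g (scaleMap α m y) *
        (Real.exp (-S y) * (1 - Real.exp (-S y)) / S y)) atTop
      (nhds (g 0 * ∫ y, Real.exp (-S y) * (1 - Real.exp (-S y)) / S y)) := by
  have hC0 : 0 ≤ C := le_trans (hg0 0) (hC 0)
  rw [← integral_const_mul]
  refine tendsto_integral_filter_of_dominated_convergence
    (fun y => C * Real.exp (-S y)) ?_ ?_ ?_ ?_
  · filter_upwards [eventually_gt_atTop (0:ℝ)] with m hm
    exact (g_comp_aesm hgi hα hsum hm).mul (r_measurable hα hS).aestronglyMeasurable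
  · filter_upwards [eventually_gt_atTop (0:ℝ)] with m hm
    refine Eventually.of_forall fun y => ?_
    rw [Real.norm_eq_abs, abs_of_nonneg (mul_nonneg (hg0 _) (r_nonneg hS y))]
    exact mul_le_mul (hC _) (r_le hS y) (r_nonneg hS y) hC0
  · exact (integrable_exp_neg_S hα hS).const_mul C
  · refine Eventually.of_forall fun y => ?_
    exact (hgc.tendsto.comp (scaleMap_tendsto hα y)).mul_const _
end P5



section P6
variable {d : ℕ} {α : Fin d → ℝ} {S : (Fin d → ℝ) → ℝ} {g : (Fin d → ℝ) → ℝ}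
/-- FTC step: the inner integral over `m`. -/
lemma ftc_inner {s : ℝ} (hs : 0 ≤ s) {t : ℝ} (ht : 0 ≤ t) :
    ∫ m in Ioc (0:ℝ) t, 2 * Real.exp (-(m * s)) * (1 - Real.exp (-(m * s))) / s
      = (1 - Real.exp (-(t * s))) ^ 2 / s ^ 2 := by
  rcases eq_or_lt_of_le hs with h | h
  · simp [← h]
  · have hs' : s ≠ 0 := h.ne'
    rw [← intervalIntegral.integral_of_le ht]
    have hderiv : ∀ m ∈ Set.uIcc (0:ℝ) t,
        HasDerivAt (fun m => (1 - Real.exp (-(m * s))) ^ 2 / s ^ 2)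
          (2 * Real.exp (-(m * s)) * (1 - Real.exp (-(m * s))) / s) m := by
      intro m _
      have h1 : HasDerivAt (fun m : ℝ => m * s) s m := hasDerivAt_mul_const s
      have h2 := (h1.neg).exp
      have h3 := ((hasDerivAt_const m (1:ℝ)).sub h2).pow 2
      have h4 : HasDerivAt (fun m => (1 - Real.exp (-(m * s))) ^ 2 / s ^ 2)
          (((2:ℕ):ℝ) * (1 - Real.exp (-(m * s))) ^ (2 - 1) * (0 - Real.exp (-(m * s)) * -s) / s ^ 2) m :=
        h3.div_const (s ^ 2)
      convert h4 using 1
      field_simp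
      ring
    have hcont : IntervalIntegrable
        (fun m => 2 * Real.exp (-(m * s)) * (1 - Real.exp (-(m * s))) / s)
        volume 0 t := by
      apply Continuous.intervalIntegrable
      fun_prop
    rw [intervalIntegral.integral_eq_sub_of_hasDerivAt hderiv hcont]
    simp

lemma fubini_A (hα : ∀ k, 0 < α k)
    (hS : ∀ z, S z = ∑ k, |z k| ^ α k)
    (hg0 : ∀ z, 0 ≤ g z) {C : ℝ} (hC : ∀ z, g z ≤ C)
    (hgi : Integrable g (volume : Measure (Fin d → ℝ))) {t : ℝ} (ht : 0 ≤ t) :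
    Integrable (Function.uncurry fun m (z : Fin d → ℝ) =>
        g z * (2 * Real.exp (-(m * S z)) * (1 - Real.exp (-(m * S z))) / S z))
      ((volume.restrict (Ioc (0:ℝ) t)).prod volume)
    ∧ (∫ z, g z * (1 - Real.exp (-(t * S z))) ^ 2 / S z ^ 2)
      = ∫ m in Ioc (0:ℝ) t,
          ∫ z, g z * (2 * Real.exp (-(m * S z)) * (1 - Real.exp (-(m * S z))) / S z) := by
  have hSm := S_measurable hα hS
  have hC0 : 0 ≤ C := le_trans (hg0 0) (hC 0)
  -- measurability of the uncurried function
  have haesm : AEStronglyMeasurable (Function.uncurry fun m (z : Fin d → ℝ) =>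
      g z * (2 * Real.exp (-(m * S z)) * (1 - Real.exp (-(m * S z))) / S z))
      ((volume.restrict (Ioc (0:ℝ) t)).prod volume) := by
    have h1 : AEStronglyMeasurable (fun p : ℝ × (Fin d → ℝ) => g p.2)
        ((volume.restrict (Ioc (0:ℝ) t)).prod volume) :=
      hgi.aestronglyMeasurable.comp_snd
    have h2 : Measurable (fun p : ℝ × (Fin d → ℝ) =>
        2 * Real.exp (-(p.1 * S p.2)) * (1 - Real.exp (-(p.1 * S p.2))) / S p.2) := by
      fun_prop
    exact h1.mul h2.aestronglyMeasurable
  -- pointwise bound on the integrand for m ∈ Ioc 0 t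
  have hbd : ∀ m ∈ Ioc (0:ℝ) t, ∀ z,
      ‖g z * (2 * Real.exp (-(m * S z)) * (1 - Real.exp (-(m * S z))) / S z)‖
        ≤ 2 * t * g z := by
    intro m hm z
    have hSz := S_nonneg hS z
    have hms : 0 ≤ m * S z := mul_nonneg hm.1.le hSz
    have hq0 : 0 ≤ 2 * Real.exp (-(m * S z)) * (1 - Real.exp (-(m * S z))) / S z := by
      have := one_sub_exp_neg_nonneg hms
      positivity
    have hqle : 2 * Real.exp (-(m * S z)) * (1 - Real.exp (-(m * S z))) / S z
        ≤ 2 * t := by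
      rcases eq_or_lt_of_le hSz with h | h
      · rw [← h]
        simp
        positivity
      · rw [div_le_iff₀ h]
        have h1 := one_sub_exp_neg_le hms
        have h2 : Real.exp (-(m * S z)) ≤ 1 := Real.exp_le_one_iff.mpr (by linarith)
        have h3 : 0 ≤ Real.exp (-(m * S z)) := (Real.exp_pos _).le
        have h4 : 1 - Real.exp (-(m * S z)) ≤ m * S z := h1
        have h5 : m ≤ t := hm.2
        nlinarith [one_sub_exp_neg_nonneg hms]
    rw [Real.norm_eq_abs, abs_of_nonneg (mul_nonneg (hg0 z) hq0), mul_comm (g z)]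
    exact mul_le_mul_of_nonneg_right hqle (hg0 z)
  have hintz : ∀ m, m ∈ Ioc (0:ℝ) t → Integrable (fun z =>
      g z * (2 * Real.exp (-(m * S z)) * (1 - Real.exp (-(m * S z))) / S z)) volume := by
    intro m hm
    refine (hgi.const_mul (2 * t)).mono ?_ (Eventually.of_forall fun z => ?_)
    · refine hgi.aestronglyMeasurable.mul ?_
      apply Measurable.aestronglyMeasurable
      fun_prop
    · rw [Real.norm_eq_abs (((2:ℝ) * t) * g z)]
      calc ‖g z * _‖ ≤ 2 * t * g z := hbd m hm z
      _ ≤ |2 * t * g z| := le_abs_self _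
  have hint : Integrable (Function.uncurry fun m (z : Fin d → ℝ) =>
      g z * (2 * Real.exp (-(m * S z)) * (1 - Real.exp (-(m * S z))) / S z))
      ((volume.restrict (Ioc (0:ℝ) t)).prod volume) := by
    rw [integrable_prod_iff haesm]
    constructor
    · rw [ae_restrict_iff' measurableSet_Ioc]
      exact Eventually.of_forall hintz
    · refine Integrable.mono' (g := fun _ => 2 * t * ∫ z, g z)
        (integrableOn_const measure_Ioc_lt_top.ne) ?_ ?_
      · exact haesm.norm.integral_prod_right'
      · rw [ae_restrict_iff' measurableSet_Ioc]
        refine Eventually.of_forall fun m hm => ?_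
        rw [Real.norm_eq_abs, abs_of_nonneg (integral_nonneg fun z => norm_nonneg _)]
        calc (∫ z, ‖g z * (2 * Real.exp (-(m * S z)) * (1 - Real.exp (-(m * S z))) / S z)‖)
            ≤ ∫ z, 2 * t * g z := integral_mono (hintz m hm).norm
              (hgi.const_mul _) (fun z => hbd m hm z)
          _ = 2 * t * ∫ z, g z := integral_const_mul _ _
  refine ⟨hint, ?_⟩
  rw [integral_integral_swap hint]
  congr 1
  funext z
  rw [integral_const_mul, ftc_inner (S_nonneg hS z) ht, mul_div_assoc]
end P6



lemma int_one_div_Ioc {a b : ℝ} (ha : 0 < a) (hab : a ≤ b) :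
    ∫ m in Ioc a b, 1 / m = Real.log b - Real.log a := by
  rw [← intervalIntegral.integral_of_le hab]
  rw [integral_one_div (by
    intro h
    rcases (Set.mem_uIcc.mp h) with ⟨h1, _⟩ | ⟨_, h2⟩
    · linarith
    · linarith)]
  rw [Real.log_div (by linarith) ha.ne']

lemma integrableOn_one_div_Ioc {a b : ℝ} (ha : 1 ≤ a) :
    IntegrableOn (fun m : ℝ => 1 / m) (Ioc a b) volume := by
  refine Integrable.mono' (g := fun _ => 1)
    (integrableOn_const measure_Ioc_lt_top.ne) ?_ ?_
  · apply Measurable.aestronglyMeasurable; fun_prop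
  · rw [ae_restrict_iff' measurableSet_Ioc]
    refine Eventually.of_forall fun m hm => ?_
    have hm1 : 1 ≤ m := le_trans ha hm.1.le
    rw [Real.norm_eq_abs, abs_of_nonneg (by positivity)]
    rw [div_le_one (by linarith)]
    linarith

lemma log_avg_tendsto {k : ℝ → ℝ} {L B : ℝ}
    (hint : ∀ x : ℝ, IntegrableOn (fun m => k m / m) (Ioc 1 x) volume)
    (hbd : ∀ m, 1 ≤ m → |k m| ≤ B)
    (hk : Tendsto k atTop (nhds L)) :
    Tendsto (fun x : ℝ => (∫ m in Ioc (1:ℝ) x, k m / m) / Real.log x) atTop (nhds L) := by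
  have hB0 : 0 ≤ B := le_trans (abs_nonneg _) (hbd 1 le_rfl)
  set B' := B + |L| with hB'def
  have hB'0 : 0 ≤ B' := by positivity
  have hbd' : ∀ m, 1 ≤ m → |k m - L| ≤ B' := fun m hm =>
    le_trans (abs_sub _ _) (add_le_add_left (hbd m hm) _)
  rw [Metric.tendsto_atTop]
  intro ε hε
  have hε' : 0 < ε / 3 := by linarith
  obtain ⟨M₀, hM₀⟩ := Metric.tendsto_atTop.mp hk (ε / 3) hε'
  set M : ℝ := max M₀ 1 with hMdef
  have hM1 : 1 ≤ M := le_max_right _ _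
  have hkM : ∀ m, M ≤ m → |k m - L| ≤ ε / 3 := fun m hm =>
    (le_of_lt (by rw [← Real.dist_eq]; exact hM₀ m (le_trans (le_max_left _ _) hm)))
  have hlogM : 0 ≤ Real.log M := Real.log_nonneg hM1
  refine ⟨max (max M 2) (Real.exp (B' * Real.log M / (ε / 3))), fun x hx => ?_⟩
  have hxM : M ≤ x := le_trans (le_trans (le_max_left _ _) (le_max_left _ _)) hx
  have hx2 : (2:ℝ) ≤ x := le_trans (le_trans (le_max_right _ _) (le_max_left _ _)) hx
  have hx1 : (1:ℝ) ≤ x := by linarith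
  have hlogx : 0 < Real.log x := Real.log_pos (by linarith)
  have hxe : Real.exp (B' * Real.log M / (ε / 3)) ≤ x := le_trans (le_max_right _ _) hx
  have hlogxe : B' * Real.log M / (ε / 3) ≤ Real.log x := by
    have := Real.log_le_log (Real.exp_pos _) hxe
    rwa [Real.log_exp] at this
  -- integrability of the pieces
  have hintL : ∀ a b : ℝ, 1 ≤ a → IntegrableOn (fun m : ℝ => L / m) (Ioc a b) volume := by
    intro a b ha
    have h1 : (fun m : ℝ => L / m) = fun m : ℝ => L * (1 / m) := by
      funext m; rw [mul_one_div]
    rw [h1]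
    exact (integrableOn_one_div_Ioc (b := b) ha).const_mul L
  have hintk : ∀ a b : ℝ, 1 ≤ a → b ≤ x → IntegrableOn (fun m => k m / m) (Ioc a b) volume := by
    intro a b ha hb
    exact (hint x).mono_set (Ioc_subset_Ioc ha hb)
  have hsub : ∀ a b : ℝ, 1 ≤ a → b ≤ x →
      IntegrableOn (fun m => (k m - L) / m) (Ioc a b) volume := by
    intro a b ha hb
    have h1 : (fun m : ℝ => (k m - L) / m) = fun m => k m / m - L / m := by
      funext m; rw [sub_div]
    rw [h1]
    exact (hintk a b ha hb).sub (hintL a b ha)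
  have hLlog : ∫ m in Ioc (1:ℝ) x, L / m = L * Real.log x := by
    have h1 : (fun m : ℝ => L / m) = fun m : ℝ => L * (1 / m) := by
      funext m; rw [mul_one_div]
    rw [h1, integral_const_mul, int_one_div_Ioc one_pos hx1, Real.log_one, sub_zero]
  have heq1 : ∫ m in Ioc (1:ℝ) x, (k m - L) / m
      = (∫ m in Ioc (1:ℝ) x, k m / m) - L * Real.log x := by
    have h1 : (fun m : ℝ => (k m - L) / m) = fun m => k m / m - L / m := by
      funext m; rw [sub_div]
    rw [h1, integral_sub (hintk 1 x le_rfl le_rfl) (hintL 1 x le_rfl), hLlog]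
  have heq2 : ∫ m in Ioc (1:ℝ) x, (k m - L) / m
      = (∫ m in Ioc (1:ℝ) M, (k m - L) / m) + ∫ m in Ioc M x, (k m - L) / m := by
    rw [← Ioc_union_Ioc_eq_Ioc hM1 hxM]
    exact setIntegral_union (Set.Ioc_disjoint_Ioc_of_le le_rfl) measurableSet_Ioc
      (hsub 1 M le_rfl hxM) (hsub M x hM1 le_rfl)
  have hb1 : |∫ m in Ioc (1:ℝ) M, (k m - L) / m| ≤ B' * Real.log M := by
    have hle : ∀ᵐ m ∂(volume.restrict (Ioc (1:ℝ) M)),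
        ‖(k m - L) / m‖ ≤ B' * (1 / m) := by
      rw [ae_restrict_iff' measurableSet_Ioc]
      refine Eventually.of_forall fun m hm => ?_
      have hm0 : (0:ℝ) < m := lt_of_lt_of_le one_pos hm.1.le
      rw [Real.norm_eq_abs, abs_div, abs_of_pos hm0, mul_one_div]
      gcongr
      exact hbd' m hm.1.le
    calc |∫ m in Ioc (1:ℝ) M, (k m - L) / m|
        ≤ ∫ m in Ioc (1:ℝ) M, B' * (1 / m) :=
          norm_integral_le_of_norm_le ((integrableOn_one_div_Ioc le_rfl).const_mul B') hle
      _ = B' * Real.log M := by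
          rw [integral_const_mul, int_one_div_Ioc one_pos hM1, Real.log_one, sub_zero]
  have hb2 : |∫ m in Ioc M x, (k m - L) / m| ≤ ε / 3 * Real.log x := by
    have hle : ∀ᵐ m ∂(volume.restrict (Ioc M x)),
        ‖(k m - L) / m‖ ≤ ε / 3 * (1 / m) := by
      rw [ae_restrict_iff' measurableSet_Ioc]
      refine Eventually.of_forall fun m hm => ?_
      have hm0 : (0:ℝ) < m := lt_of_lt_of_le (lt_of_lt_of_le one_pos hM1) hm.1.le
      rw [Real.norm_eq_abs, abs_div, abs_of_pos hm0, mul_one_div]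
      gcongr
      exact hkM m hm.1.le
    calc |∫ m in Ioc M x, (k m - L) / m|
        ≤ ∫ m in Ioc M x, ε / 3 * (1 / m) :=
          norm_integral_le_of_norm_le ((integrableOn_one_div_Ioc hM1).const_mul (ε/3)) hle
      _ = ε / 3 * (Real.log x - Real.log M) := by
          rw [integral_const_mul, int_one_div_Ioc (lt_of_lt_of_le one_pos hM1) hxM]
      _ ≤ ε / 3 * Real.log x := by nlinarith
  have hkey : (∫ m in Ioc (1:ℝ) x, k m / m) / Real.log x - L
      = (∫ m in Ioc (1:ℝ) x, (k m - L) / m) / Real.log x := by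
    rw [heq1]
    field_simp
  rw [Real.dist_eq, hkey, abs_div, abs_of_pos hlogx]
  have hnum : |∫ m in Ioc (1:ℝ) x, (k m - L) / m| ≤ B' * Real.log M + ε / 3 * Real.log x := by
    rw [heq2]
    exact le_trans (abs_add_le _ _) (add_le_add hb1 hb2)
  have hfrac : B' * Real.log M / Real.log x ≤ ε / 3 := by
    rw [div_le_iff₀ hlogx]
    have := (div_le_iff₀ hε').mp hlogxe
    linarith
  calc |∫ m in Ioc (1:ℝ) x, (k m - L) / m| / Real.log x
      ≤ (B' * Real.log M + ε / 3 * Real.log x) / Real.log x := by gcongr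
    _ = B' * Real.log M / Real.log x + ε / 3 := by
        rw [add_div, mul_div_assoc (ε/3), div_self hlogx.ne', mul_one]
    _ ≤ ε / 3 + ε / 3 := by linarith
    _ < ε := by linarith

end Aux



theorem tendsto_Wtilde
    (d : ℕ) (α : Fin d → ℝ) (hα : ∀ k, 0 < α k) (hsum : ∑ k, 1 / α k = 2)
    (g : (Fin d → ℝ) → ℝ) (hg0 : ∀ z, 0 ≤ g z) (hgb : ∃ C, ∀ z, g z ≤ C)
    (hgc : ContinuousAt g 0) (hgi : Integrable g volume)
    (S : (Fin d → ℝ) → ℝ) (hS : ∀ z, S z = ∑ k, |z k| ^ α k) :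
    Tendsto (fun n : ℕ =>
        ∫ z : Fin d → ℝ, g z * (1 - Real.exp (-(n : ℝ) * S z)) ^ 2 / (S z ^ 2 * Real.log n))
      atTop
      (nhds (2 * g 0 * ∫ z : Fin d → ℝ, Real.exp (-S z) * (1 - Real.exp (-S z)) / S z)) := by
  classical
  obtain ⟨C, hC⟩ := hgb
  have hC0 : 0 ≤ C := le_trans (hg0 0) (hC 0)
  set I : ℝ := ∫ z : Fin d → ℝ, Real.exp (-S z) * (1 - Real.exp (-S z)) / S z with hI
  set kk : ℝ → ℝ := fun m => ∫ y, g (scaleMap α m y) *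
      (Real.exp (-S y) * (1 - Real.exp (-S y)) / S y) with hkk
  set hfun : ℝ → ℝ := fun m => ∫ z, g z *
      (2 * Real.exp (-(m * S z)) * (1 - Real.exp (-(m * S z))) / S z) with hhfun
  set c₀ : ℝ := ∫ m in Set.Ioc (0:ℝ) 1, hfun m with hc₀
  -- bound for kk
  have hkbd : ∀ m : ℝ, 0 < m → |kk m| ≤ C * ∫ y, Real.exp (-S y) := by
    intro m hm
    rw [← Real.norm_eq_abs, hkk, ← integral_const_mul]
    refine norm_integral_le_of_norm_le ((integrable_exp_neg_S hα hS).const_mul C) ?_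
    refine Eventually.of_forall fun y => ?_
    rw [Real.norm_eq_abs, abs_of_nonneg (mul_nonneg (hg0 _) (r_nonneg hS y))]
    exact mul_le_mul (hC _) (r_le hS y) (r_nonneg hS y) hC0
  -- tendsto of kk
  have hktend : Tendsto kk atTop (nhds (g 0 * I)) := k_tendsto hα hsum hS hg0 hC hgc hgi
  -- integrability of hfun on Ioc 0 t
  have hfint : ∀ t : ℝ, 0 ≤ t → IntegrableOn hfun (Set.Ioc (0:ℝ) t) volume := by
    intro t ht
    exact ((fubini_A hα hS hg0 hC hgi ht).1).integral_prod_left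
  -- equality hfun = 2*kk/m for positive m
  have hfk : ∀ m : ℝ, 0 < m → hfun m = 2 * kk m / m := by
    intro m hm
    show (∫ z, g z * (2 * Real.exp (-(m * S z)) * (1 - Real.exp (-(m * S z))) / S z))
        = 2 * kk m / m
    rw [h_eq_k hα hsum hS hgi hm]
    show 2 / m * kk m = 2 * kk m / m
    rw [div_mul_eq_mul_div]
  -- step: W n equals (c₀ + ∫_{Ioc 1 n} 2 kk m / m)/ log n for n ≥ 1
  have hW : ∀ n : ℕ, 1 ≤ n →
      (∫ z : Fin d → ℝ, g z * (1 - Real.exp (-(n : ℝ) * S z)) ^ 2 / (S z ^ 2 * Real.log n))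
      = (c₀ + ∫ m in Set.Ioc (1:ℝ) (n:ℝ), 2 * kk m / m) / Real.log n := by
    intro n hn
    have hn1 : (1:ℝ) ≤ (n:ℝ) := by exact_mod_cast hn
    have hn0 : (0:ℝ) ≤ (n:ℝ) := by linarith
    have e1 : ∀ z : Fin d → ℝ, g z * (1 - Real.exp (-(n : ℝ) * S z)) ^ 2 / (S z ^ 2 * Real.log n)
        = (g z * (1 - Real.exp (-((n:ℝ) * S z))) ^ 2 / S z ^ 2) / Real.log n := by
      intro z
      rw [div_div, neg_mul]
    simp_rw [e1]
    rw [integral_div]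
    congr 1
    rw [(fubini_A hα hS hg0 hC hgi hn0).2, ← hhfun]
    rw [← Set.Ioc_union_Ioc_eq_Ioc (le_of_lt one_pos) hn1]
    rw [setIntegral_union (Set.Ioc_disjoint_Ioc_of_le le_rfl) measurableSet_Ioc
      ((hfint (n:ℝ) hn0).mono_set (Set.Ioc_subset_Ioc le_rfl hn1))
      ((hfint (n:ℝ) hn0).mono_set (Set.Ioc_subset_Ioc (le_of_lt one_pos) le_rfl))]
    rw [← hc₀]
    congr 1
    refine setIntegral_congr_fun measurableSet_Ioc fun m hm => ?_
    exact hfk m (lt_of_lt_of_le one_pos hm.1.le)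
  -- the averaged limit
  have havg : Tendsto (fun x : ℝ => (∫ m in Set.Ioc (1:ℝ) x, 2 * kk m / m) / Real.log x)
      atTop (nhds (2 * (g 0 * I))) := by
    refine log_avg_tendsto (B := 2 * (C * ∫ y, Real.exp (-S y))) ?_ ?_ ?_
    · intro x
      rcases le_or_gt x 1 with hx | hx
      · rw [Set.Ioc_eq_empty (by exact fun h => absurd hx (not_le.mpr h))]
        exact integrableOn_empty
      · have h1 : IntegrableOn hfun (Set.Ioc (1:ℝ) x) volume :=
          (hfint x (by linarith)).mono_set (Set.Ioc_subset_Ioc (le_of_lt one_pos) le_rfl)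
        refine h1.congr_fun (fun m hm => ?_) measurableSet_Ioc
        exact hfk m (lt_of_lt_of_le one_pos hm.1.le)
    · intro m hm
      rw [abs_mul, abs_two]
      exact mul_le_mul_of_nonneg_left (hkbd m (lt_of_lt_of_le one_pos hm)) (by norm_num)
    · have := hktend.const_mul (2:ℝ)
      simpa using this
  -- conclude
  have hlog : Tendsto (fun n : ℕ => Real.log (n:ℝ)) atTop atTop :=
    Real.tendsto_log_atTop.comp tendsto_natCast_atTop_atTop
  have hzero : Tendsto (fun n : ℕ => c₀ / Real.log (n:ℝ)) atTop (nhds 0) :=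
    tendsto_const_nhds.div_atTop hlog
  have hmain : Tendsto (fun n : ℕ =>
      (∫ m in Set.Ioc (1:ℝ) (n:ℝ), 2 * kk m / m) / Real.log (n:ℝ)) atTop
      (nhds (2 * (g 0 * I))) := havg.comp tendsto_natCast_atTop_atTop
  have hsum' : Tendsto (fun n : ℕ =>
      c₀ / Real.log (n:ℝ) + (∫ m in Set.Ioc (1:ℝ) (n:ℝ), 2 * kk m / m) / Real.log (n:ℝ))
      atTop (nhds (0 + 2 * (g 0 * I))) := hzero.add hmain
  rw [zero_add] at hsum'
  have hfinal : Tendsto (fun n : ℕ =>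
      (c₀ + ∫ m in Set.Ioc (1:ℝ) (n:ℝ), 2 * kk m / m) / Real.log (n:ℝ))
      atTop (nhds (2 * (g 0 * I))) := by
    refine hsum'.congr fun n => ?_
    rw [add_div]
  have : (2 : ℝ) * (g 0 * I) = 2 * g 0 * I := by ring
  rw [this] at hfinal
  refine hfinal.congr' ?_
  filter_upwards [eventually_ge_atTop 1] with n hn
  exact (hW n hn).symm
end

section
/- Let h : ℝ → ℝ be continuous with support in [0,1], and define h̃(s) = ∫_s^1 h(t) dt for s ∈ [0,1]. If 0 ≤ h̃ ≤ 1_{[t₁,t₂]} pointwise for some 0 ≤ t₁ < t₂ ≤ 1, then for any γ > δ > 0 and n ≥ 1: n³ ∫₀¹ e^{-nδ s} ∫_s¹ e^{-nγ(u-s)} h̃(u) ∫_s^u h̃(v) dv du ds ≤ (n/(γ-δ)²) · e^{-nδ t₁} · (t₂ - t₁). -/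
set_option maxHeartbeats 1000000


open MeasureTheory

theorem I3_tightness_estimate
    (h : ℝ → ℝ) (hc : Continuous h) (hsupp : Function.support h ⊆ Set.Icc 0 1)
    (ht : ℝ → ℝ) (hht : ∀ s, ht s = ∫ t in Set.Ioc s 1, h t)
    (t₁ t₂ : ℝ) (h01 : 0 ≤ t₁) (h12 : t₁ < t₂) (h21 : t₂ ≤ 1)
    (hbound : ∀ s, 0 ≤ ht s ∧ ht s ≤ Set.indicator (Set.Icc t₁ t₂) (fun _ => 1) s)
    (γ δ : ℝ) (hδ : 0 < δ) (hγδ : δ < γ) (n : ℕ) (hn : 1 ≤ n) :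
    (n : ℝ) ^ 3 *
        ∫ s in Set.Ioc (0:ℝ) 1, Real.exp (-(n : ℝ) * δ * s) *
          ∫ u in Set.Ioc s 1, Real.exp (-(n : ℝ) * γ * (u - s)) * ht u *
            ∫ v in Set.Ioc s u, ht v
      ≤ (n : ℝ) / (γ - δ) ^ 2 * Real.exp (-(n : ℝ) * δ * t₁) * (t₂ - t₁) := by
  have hn0 : (0:ℝ) < n := by exact_mod_cast Nat.lt_of_lt_of_le Nat.zero_lt_one hn
  set a : ℝ := (n : ℝ) * (γ - δ) with ha_def
  have ha : 0 < a := mul_pos hn0 (by linarith)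
  -- continuity of ht
  have htceq : ht = fun s => (∫ t in (0:ℝ)..1, h t) - ∫ t in (0:ℝ)..s, h t := by
    funext s
    rcases le_or_gt s 1 with hs1 | hs1
    · have h0 : (∫ t in s..(1:ℝ), h t) = ∫ t in Set.Ioc s 1, h t :=
        intervalIntegral.integral_of_le hs1
      have h0' := intervalIntegral.integral_add_adjacent_intervals
        (hc.intervalIntegrable (μ := volume) 0 s) (hc.intervalIntegrable s 1)
      rw [hht s]
      linarith
    · rw [hht s, Set.Ioc_eq_empty (by linarith), Measure.restrict_empty, integral_zero_measure]
      have h2 : ∫ t in (1:ℝ)..s, h t = 0 := by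
        rw [intervalIntegral.integral_of_le hs1.le]
        rw [setIntegral_congr_fun measurableSet_Ioc (g := fun _ => (0:ℝ))
          (fun t htm => by
            by_contra hne
            exact absurd ((hsupp hne).2) (by exact not_le.2 htm.1))]
        simp
      have := intervalIntegral.integral_add_adjacent_intervals
        (hc.intervalIntegrable (μ := volume) 0 1) (hc.intervalIntegrable 1 s)
      linarith
  have htc : Continuous ht := by
    rw [htceq]
    exact continuous_const.sub (intervalIntegral.continuous_primitive
      (fun a b => hc.intervalIntegrable a b) 0)
  have ht0 : ∀ v, 0 ≤ ht v := fun v => (hbound v).1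
  have ht1 : ∀ v, ht v ≤ 1 := by
    intro v
    refine (hbound v).2.trans ?_
    by_cases hv : v ∈ Set.Icc t₁ t₂ <;> simp [Set.indicator_apply, hv]
  -- the inner integral of ht
  have hI0 : ∀ s u : ℝ, 0 ≤ ∫ v in Set.Ioc s u, ht v := fun s u =>
    setIntegral_nonneg measurableSet_Ioc (fun v _ => ht0 v)
  have hIle : ∀ s u : ℝ, s ≤ u → (∫ v in Set.Ioc s u, ht v) ≤ u - s := by
    intro s u hsu
    have h1 : (∫ v in Set.Ioc s u, ht v) ≤ ∫ _ in Set.Ioc s u, (1:ℝ) := by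
      refine setIntegral_mono_on (htc.integrableOn_Ioc) (integrableOn_const ?_)
        measurableSet_Ioc (fun v _ => ht1 v)
      rw [Real.volume_Ioc]; exact ENNReal.ofReal_ne_top
    have h2 : ∫ _ in Set.Ioc s u, (1:ℝ) = u - s := by
      simp [Real.volume_Ioc, ENNReal.toReal_ofReal (sub_nonneg.2 hsu), hsu]
    linarith
  -- the product-space majorant
  set T : Set (ℝ × ℝ) :=
    {p | p.1 ∈ Set.Ioc (0:ℝ) 1 ∧ p.2 ∈ Set.Ioc p.1 1 ∧ p.2 ∈ Set.Icc t₁ t₂} with hT_def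
  set F : ℝ × ℝ → ℝ :=
    T.indicator (fun p => Real.exp (-(a * (p.2 - p.1))) * (p.2 - p.1)) with hF_def
  have hTm : MeasurableSet T := by
    have : T = (Set.Ioc (0:ℝ) 1 ×ˢ Set.Icc t₁ t₂) ∩ {p : ℝ × ℝ | p.1 < p.2}
        ∩ {p : ℝ × ℝ | p.2 ≤ 1} := by
      ext p; simp only [hT_def, Set.mem_setOf_eq, Set.mem_inter_iff, Set.mem_prod,
        Set.mem_Ioc, Set.mem_Icc]
      tauto
    rw [this]
    exact (((measurableSet_Ioc.prod measurableSet_Icc).inter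
      (measurableSet_lt measurable_fst measurable_snd)).inter
      (measurable_snd measurableSet_Iic))
  have hF0 : ∀ p, 0 ≤ F p := by
    intro p
    refine Set.indicator_nonneg (fun q hq => ?_) p
    exact mul_nonneg (Real.exp_nonneg _) (sub_nonneg.2 hq.2.1.1.le)
  have hcF : Continuous (fun p : ℝ × ℝ => Real.exp (-(a * (p.2 - p.1))) * (p.2 - p.1)) :=
    (Real.continuous_exp.comp (continuous_const.mul (continuous_snd.sub continuous_fst)).neg).mul
      (continuous_snd.sub continuous_fst)
  have hFmeas : Measurable F := Measurable.indicator hcF.measurable hTm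
  have hsq : Integrable ((Set.Icc (0:ℝ) 1 ×ˢ Set.Icc (0:ℝ) 1).indicator
      (fun _ : ℝ × ℝ => (1:ℝ))) := by
    rw [integrable_indicator_iff (measurableSet_Icc.prod measurableSet_Icc)]
    exact integrableOn_const ((isCompact_Icc.prod isCompact_Icc).measure_lt_top.ne)
  have hFle : ∀ p, F p ≤ (Set.Icc (0:ℝ) 1 ×ˢ Set.Icc (0:ℝ) 1).indicator
      (fun _ : ℝ × ℝ => (1:ℝ)) p := by
    intro p
    by_cases hp : p ∈ T
    · have hmem : p ∈ Set.Icc (0:ℝ) 1 ×ˢ Set.Icc (0:ℝ) 1 := by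
        obtain ⟨⟨hs0, hs1⟩, ⟨hsu, hu1⟩, _⟩ := hp
        exact ⟨⟨hs0.le, hs1⟩, ⟨by linarith, hu1⟩⟩
      rw [hF_def, Set.indicator_of_mem hp, Set.indicator_of_mem hmem]
      obtain ⟨⟨hs0, hs1⟩, ⟨hsu, hu1⟩, _⟩ := hp
      have h1 : Real.exp (-(a * (p.2 - p.1))) ≤ 1 := by
        rw [Real.exp_le_one_iff]
        have : 0 ≤ a * (p.2 - p.1) := mul_nonneg ha.le (by linarith)
        linarith
      have h2 : p.2 - p.1 ≤ 1 := by linarith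
      calc Real.exp (-(a * (p.2 - p.1))) * (p.2 - p.1) ≤ 1 * 1 :=
            mul_le_mul h1 h2 (by linarith) one_pos.le
        _ = 1 := one_mul 1
    · rw [hF_def, Set.indicator_of_notMem hp]
      exact Set.indicator_nonneg (fun _ _ => one_pos.le) p
  have hFint : Integrable F := by
    refine Integrable.mono' hsq hFmeas.aestronglyMeasurable (ae_of_all _ fun p => ?_)
    rw [Real.norm_eq_abs, abs_of_nonneg (hF0 p)]
    exact hFle p
  have hFs_int : ∀ s : ℝ, Integrable (fun u => F (s, u)) := by
    intro s
    refine Integrable.mono' (g := (Set.Icc (0:ℝ) 1).indicator (fun _ => (1:ℝ))) ?_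
      ((hFmeas.comp (measurable_prodMk_left)).aestronglyMeasurable)
      (ae_of_all _ fun u => ?_)
    · rw [integrable_indicator_iff measurableSet_Icc]
      exact integrableOn_const (by rw [Real.volume_Icc]; exact ENNReal.ofReal_ne_top)
    · rw [Real.norm_eq_abs, abs_of_nonneg (hF0 (s, u))]
      refine (hFle (s, u)).trans ?_
      by_cases hu : (s, u) ∈ Set.Icc (0:ℝ) 1 ×ˢ Set.Icc (0:ℝ) 1
      · rw [Set.indicator_of_mem hu, Set.indicator_of_mem hu.2]
      · rw [Set.indicator_of_notMem hu]
        exact Set.indicator_nonneg (fun _ _ => one_pos.le) u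
  have hmarg : Integrable (fun s => ∫ u, F (s, u)) := by
    have := hFint
    rw [Measure.volume_eq_prod] at this
    exact this.integral_prod_left
  -- Step 1: bound the inner integral
  have claim1 : ∀ s ∈ Set.Ioc (0:ℝ) 1,
      Real.exp (-(n : ℝ) * δ * s) *
        (∫ u in Set.Ioc s 1, Real.exp (-(n : ℝ) * γ * (u - s)) * ht u *
          ∫ v in Set.Ioc s u, ht v)
      ≤ Real.exp (-(n : ℝ) * δ * t₁) * ∫ u, F (s, u) := by
    intro s hs
    rw [← integral_const_mul]
    have step : (∫ u in Set.Ioc s 1, Real.exp (-(n : ℝ) * δ * s) *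
        (Real.exp (-(n : ℝ) * γ * (u - s)) * ht u * ∫ v in Set.Ioc s u, ht v))
        ≤ ∫ u in Set.Ioc s 1, Real.exp (-(n : ℝ) * δ * t₁) * F (s, u) := by
      refine integral_mono_of_nonneg (ae_of_all _ fun u => ?_)
        (((hFs_int s).const_mul _).integrableOn)
        ((ae_restrict_iff' measurableSet_Ioc).2 (ae_of_all _ fun u hu => ?_))
      · exact mul_nonneg (Real.exp_nonneg _)
          (mul_nonneg (mul_nonneg (Real.exp_nonneg _) (ht0 u)) (hI0 s u))
      · dsimp only
        by_cases hu2 : u ∈ Set.Icc t₁ t₂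
        · have hmemT : (s, u) ∈ T := ⟨hs, hu, hu2⟩
          have hFval : F (s, u) = Real.exp (-(a * (u - s))) * (u - s) := by
            rw [hF_def, Set.indicator_of_mem hmemT]
          rw [hFval]
          have e1 : Real.exp (-(n : ℝ) * δ * s) * Real.exp (-(n : ℝ) * γ * (u - s))
              ≤ Real.exp (-(n : ℝ) * δ * t₁) * Real.exp (-(a * (u - s))) := by
            rw [← Real.exp_add, ← Real.exp_add, Real.exp_le_exp]
            have h3 : 0 ≤ (n : ℝ) * δ * (u - t₁) :=
              mul_nonneg (mul_nonneg hn0.le hδ.le) (sub_nonneg.2 hu2.1)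
            rw [ha_def]; nlinarith
          have e2 : ht u * (∫ v in Set.Ioc s u, ht v) ≤ u - s := by
            calc ht u * (∫ v in Set.Ioc s u, ht v) ≤ 1 * (u - s) :=
                  mul_le_mul (ht1 u) (hIle s u hu.1.le) (hI0 s u) one_pos.le
              _ = u - s := one_mul _
          calc Real.exp (-(n : ℝ) * δ * s) *
                (Real.exp (-(n : ℝ) * γ * (u - s)) * ht u * ∫ v in Set.Ioc s u, ht v)
              = (Real.exp (-(n : ℝ) * δ * s) * Real.exp (-(n : ℝ) * γ * (u - s))) *
                (ht u * ∫ v in Set.Ioc s u, ht v) := by ring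
            _ ≤ (Real.exp (-(n : ℝ) * δ * t₁) * Real.exp (-(a * (u - s)))) * (u - s) := by
                refine mul_le_mul e1 e2 (mul_nonneg (ht0 u) (hI0 s u))
                  (mul_nonneg (Real.exp_nonneg _) (Real.exp_nonneg _))
            _ = Real.exp (-(n : ℝ) * δ * t₁) * (Real.exp (-(a * (u - s))) * (u - s)) := by
                ring
        · have htu0 : ht u = 0 :=
            le_antisymm (by simpa [Set.indicator_of_notMem hu2] using (hbound u).2) (ht0 u)
          rw [htu0]
          simpa using mul_nonneg (Real.exp_nonneg (-(n : ℝ) * δ * t₁)) (hF0 (s, u))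
    refine step.trans ?_
    rw [integral_const_mul]
    exact mul_le_mul_of_nonneg_left
      (setIntegral_le_integral (hFs_int s) (ae_of_all _ fun u => hF0 (s, u)))
      (Real.exp_nonneg _)
  -- Step 2: swap and compute
  have hswap : ∫ s, ∫ u, F (s, u) = ∫ u, ∫ s, F (s, u) := by
    have huncurry : Function.uncurry (fun s u => F (s, u)) = F := by
      ext p; simp [Function.uncurry]
    have hFint' : Integrable (Function.uncurry fun s u => F (s, u)) (volume.prod volume) := by
      rw [huncurry, ← Measure.volume_eq_prod]; exact hFint
    have := integral_integral_swap hFint'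
    simpa [Measure.volume_eq_prod] using this
  have claim2 : ∀ u : ℝ, (∫ s, F (s, u)) ≤
      (Set.Icc t₁ t₂).indicator (fun _ => a⁻¹ * a⁻¹) u := by
    intro u
    by_cases hu : u ∈ Set.Icc t₁ t₂
    · rw [Set.indicator_of_mem hu]
      have hu0 : 0 ≤ u := le_trans h01 hu.1
      set ψ : ℝ → ℝ := (Set.Ioc (0:ℝ) u).indicator
        (fun s => Real.exp (-(a * (u - s))) * (u - s)) with hψ_def
      have hψ0 : ∀ s, 0 ≤ ψ s := by
        intro s
        refine Set.indicator_nonneg (fun q hq => ?_) s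
        exact mul_nonneg (Real.exp_nonneg _) (sub_nonneg.2 hq.2)
      have hφc : Continuous (fun s : ℝ => Real.exp (-(a * (u - s))) * (u - s)) :=
        (Real.continuous_exp.comp (continuous_const.mul (continuous_const.sub continuous_id)).neg).mul
          (continuous_const.sub continuous_id)
      have hψint : Integrable ψ := by
        rw [hψ_def, integrable_indicator_iff measurableSet_Ioc]
        exact hφc.integrableOn_Ioc
      have hle : ∀ s, F (s, u) ≤ ψ s := by
        intro s
        by_cases hp : (s, u) ∈ T
        · rw [hF_def, Set.indicator_of_mem hp, hψ_def,
            Set.indicator_of_mem (Set.mem_Ioc.2 ⟨hp.1.1, hp.2.1.1.le⟩)]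
        · rw [hF_def, Set.indicator_of_notMem hp]
          exact hψ0 s
      have h1 : (∫ s, F (s, u)) ≤ ∫ s, ψ s :=
        integral_mono_of_nonneg (ae_of_all _ fun s => hF0 (s, u)) hψint (ae_of_all _ hle)
      refine h1.trans ?_
      rw [hψ_def, integral_indicator measurableSet_Ioc,
        ← intervalIntegral.integral_of_le hu0]
      set Φ : ℝ → ℝ := fun x => Real.exp (-(a * (u - x))) * ((u - x) * a⁻¹ + a⁻¹ * a⁻¹)
        with hΦ_def
      have hderiv : ∀ x ∈ Set.uIcc (0:ℝ) u,
          HasDerivAt Φ (Real.exp (-(a * (u - x))) * (u - x)) x := by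
        intro x _
        have d1 : HasDerivAt (fun y : ℝ => -(a * (u - y))) a x := by
          have := (((hasDerivAt_id x).const_sub u).const_mul a).neg
          exact this.congr_deriv (by simp)
        have d2 : HasDerivAt (fun y : ℝ => Real.exp (-(a * (u - y))))
            (Real.exp (-(a * (u - x))) * a) x := d1.exp
        have d3 : HasDerivAt (fun y : ℝ => (u - y) * a⁻¹ + a⁻¹ * a⁻¹) (-a⁻¹) x := by
          have := (((hasDerivAt_id x).const_sub u).mul_const a⁻¹).add_const (a⁻¹ * a⁻¹)
          simpa using this
        have := d2.mul d3
        refine this.congr_deriv ?_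
        linear_combination (Real.exp (-(a * (u - x))) * (u - x) + Real.exp (-(a * (u - x))) * a⁻¹) * mul_inv_cancel₀ ha.ne'
      have hcint : IntervalIntegrable (fun s => Real.exp (-(a * (u - s))) * (u - s))
          volume 0 u := hφc.intervalIntegrable 0 u
      rw [intervalIntegral.integral_eq_sub_of_hasDerivAt hderiv hcint]
      have hval : Φ u - Φ 0 = a⁻¹ * a⁻¹ -
          Real.exp (-(a * u)) * (u * a⁻¹ + a⁻¹ * a⁻¹) := by
        simp [hΦ_def]
      rw [hval]
      have : 0 ≤ Real.exp (-(a * u)) * (u * a⁻¹ + a⁻¹ * a⁻¹) := by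
        have h5 : 0 ≤ u * a⁻¹ := mul_nonneg hu0 (inv_nonneg.2 ha.le)
        have h6 : 0 ≤ a⁻¹ * a⁻¹ := mul_nonneg (inv_nonneg.2 ha.le) (inv_nonneg.2 ha.le)
        exact mul_nonneg (Real.exp_nonneg _) (by linarith)
      linarith
    · have hz : ∀ s, F (s, u) = 0 := by
        intro s
        rw [hF_def, Set.indicator_of_notMem (fun hp => hu hp.2.2)]
      rw [Set.indicator_of_notMem hu]
      simp [hz]
    -- end claim2
  have hindint : Integrable ((Set.Icc t₁ t₂).indicator (fun _ : ℝ => a⁻¹ * a⁻¹)) := by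
    rw [integrable_indicator_iff measurableSet_Icc]
    exact integrableOn_const (by rw [Real.volume_Icc]; exact ENNReal.ofReal_ne_top)
  have hfinal : (∫ u, ∫ s, F (s, u)) ≤ a⁻¹ * a⁻¹ * (t₂ - t₁) := by
    have h1 : (∫ u, ∫ s, F (s, u)) ≤
        ∫ u, (Set.Icc t₁ t₂).indicator (fun _ => a⁻¹ * a⁻¹) u :=
      integral_mono_of_nonneg
        (ae_of_all _ fun u => integral_nonneg (fun s => hF0 (s, u)))
        hindint (ae_of_all _ claim2)
    have h2 : (∫ u, (Set.Icc t₁ t₂).indicator (fun _ : ℝ => a⁻¹ * a⁻¹) u)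
        = a⁻¹ * a⁻¹ * (t₂ - t₁) := by
      rw [integral_indicator_const _ measurableSet_Icc, Real.volume_real_Icc_of_le h12.le, smul_eq_mul]
      ring
    linarith
  -- assemble
  have houter : (∫ s in Set.Ioc (0:ℝ) 1, Real.exp (-(n : ℝ) * δ * s) *
      ∫ u in Set.Ioc s 1, Real.exp (-(n : ℝ) * γ * (u - s)) * ht u *
        ∫ v in Set.Ioc s u, ht v)
      ≤ Real.exp (-(n : ℝ) * δ * t₁) * (a⁻¹ * a⁻¹ * (t₂ - t₁)) := by
    have h1 : (∫ s in Set.Ioc (0:ℝ) 1, Real.exp (-(n : ℝ) * δ * s) *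
        ∫ u in Set.Ioc s 1, Real.exp (-(n : ℝ) * γ * (u - s)) * ht u *
          ∫ v in Set.Ioc s u, ht v)
        ≤ ∫ s in Set.Ioc (0:ℝ) 1, Real.exp (-(n : ℝ) * δ * t₁) * ∫ u, F (s, u) := by
      refine integral_mono_of_nonneg (ae_of_all _ fun s => ?_)
        ((hmarg.const_mul _).integrableOn)
        ((ae_restrict_iff' measurableSet_Ioc).2 (ae_of_all _ claim1))
      exact mul_nonneg (Real.exp_nonneg _)
        (setIntegral_nonneg measurableSet_Ioc (fun u _ =>
          mul_nonneg (mul_nonneg (Real.exp_nonneg _) (ht0 u)) (hI0 s u)))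
    have h2 : (∫ s in Set.Ioc (0:ℝ) 1, Real.exp (-(n : ℝ) * δ * t₁) * ∫ u, F (s, u))
        = Real.exp (-(n : ℝ) * δ * t₁) * ∫ s in Set.Ioc (0:ℝ) 1, ∫ u, F (s, u) :=
      integral_const_mul _ _
    have h3 : (∫ s in Set.Ioc (0:ℝ) 1, ∫ u, F (s, u)) ≤ ∫ s, ∫ u, F (s, u) :=
      setIntegral_le_integral hmarg
        (ae_of_all _ fun s => integral_nonneg (fun u => hF0 (s, u)))
    have h4 : (∫ s, ∫ u, F (s, u)) ≤ a⁻¹ * a⁻¹ * (t₂ - t₁) := by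
      rw [hswap]; exact hfinal
    have hexp : (0:ℝ) ≤ Real.exp (-(n : ℝ) * δ * t₁) := Real.exp_nonneg _
    calc (∫ s in Set.Ioc (0:ℝ) 1, Real.exp (-(n : ℝ) * δ * s) *
          ∫ u in Set.Ioc s 1, Real.exp (-(n : ℝ) * γ * (u - s)) * ht u *
            ∫ v in Set.Ioc s u, ht v)
        ≤ Real.exp (-(n : ℝ) * δ * t₁) * ∫ s in Set.Ioc (0:ℝ) 1, ∫ u, F (s, u) := by
          rw [← h2]; exact h1
      _ ≤ Real.exp (-(n : ℝ) * δ * t₁) * (a⁻¹ * a⁻¹ * (t₂ - t₁)) :=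
          mul_le_mul_of_nonneg_left (h3.trans h4) hexp
  have hfact : (n : ℝ) ^ 3 * (Real.exp (-(n : ℝ) * δ * t₁) * (a⁻¹ * a⁻¹ * (t₂ - t₁)))
      = (n : ℝ) / (γ - δ) ^ 2 * Real.exp (-(n : ℝ) * δ * t₁) * (t₂ - t₁) := by
    rw [ha_def]
    have hne : (n : ℝ) ≠ 0 := ne_of_gt hn0
    have hne2 : γ - δ ≠ 0 := ne_of_gt (by linarith)
    field_simp
  calc (n : ℝ) ^ 3 *
        ∫ s in Set.Ioc (0:ℝ) 1, Real.exp (-(n : ℝ) * δ * s) *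
          ∫ u in Set.Ioc s 1, Real.exp (-(n : ℝ) * γ * (u - s)) * ht u *
            ∫ v in Set.Ioc s u, ht v
      ≤ (n : ℝ) ^ 3 * (Real.exp (-(n : ℝ) * δ * t₁) * (a⁻¹ * a⁻¹ * (t₂ - t₁))) :=
        mul_le_mul_of_nonneg_left houter (by positivity)
    _ = (n : ℝ) / (γ - δ) ^ 2 * Real.exp (-(n : ℝ) * δ * t₁) * (t₂ - t₁) := hfact
end
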